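/- arXiv:1601.03226 — 7 statements merged into one kernel-verified Lean document; each statement's English description precedes it below -/
import Mathlib

section
/- Strong subadditivity for log-determinant of covariance matrices: Let n_A, n_B, n_C be positive integers, n = n_A + n_B + n_C, and let V be a 2n×2n real symmetric bona fide covariance matrix of a system of n modes partitioned into groups A, B, C of n_A, n_B, n_C modes respectively. Then log det V_{A∪B} + log det V_{B∪C} − log det V_A − log det V_C ≥ 0. -/
open Matrix
open scoped ComplexOrder

noncomputable section
/-- The 2×2 symplectic form σ = [[0,1],[-1,0]]. -/
def symp : Matrix (Fin 2) (Fin 2) ℝ := !![0, 1; -1, 0]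

/-- The symplectic form on a system whose modes are indexed by `α`:
the direct sum of one copy of `σ` per mode. -/
def Jmat (α : Type*) [DecidableEq α] : Matrix (α × Fin 2) (α × Fin 2) ℝ :=
  fun p q => if p.1 = q.1 then symp p.2 q.2 else 0

/-- A real symmetric matrix `V` on phase space is a bona fide covariance matrix
if the complex Hermitian matrix `V + i J` is positive semidefinite. -/
def BonaFide {α : Type*} [Fintype α] [DecidableEq α]
    (V : Matrix (α × Fin 2) (α × Fin 2) ℝ) : Prop :=
  ((V.map (Complex.ofReal)) + Complex.I • ((Jmat α).map (Complex.ofReal))).PosSemidef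

namespace SSAaux

open Complex

lemma symp_mul_symp : symp * symp = -1 := by
  ext i j
  fin_cases i <;> fin_cases j <;> simp [symp, Matrix.mul_apply, Fin.sum_univ_two, Matrix.one_apply]

lemma Jmat_eq_kron (α : Type*) [DecidableEq α] :
    Jmat α = Matrix.kroneckerMap (· * ·) (1 : Matrix α α ℝ) symp := by
  ext ⟨a, i⟩ ⟨b, j⟩
  by_cases h : a = b <;> simp [Jmat, Matrix.one_apply, h]

lemma Jmat_transpose (α : Type*) [DecidableEq α] : (Jmat α)ᵀ = -Jmat α := by
  ext ⟨a, i⟩ ⟨b, j⟩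
  by_cases h : a = b
  · subst h
    fin_cases i <;> fin_cases j <;> simp [Jmat, symp]
  · simp [Jmat, h, Ne.symm h]

lemma Jmat_mul_transpose (α : Type*) [Fintype α] [DecidableEq α] :
    Jmat α * (Jmat α)ᵀ = 1 := by
  rw [Jmat_transpose, Jmat_eq_kron, Matrix.mul_neg, ← Matrix.mul_kronecker_mul]
  rw [symp_mul_symp, Matrix.mul_one]
  ext ⟨a, i⟩ ⟨b, j⟩
  by_cases h : a = b <;> by_cases h2 : i = j <;>
    simp [Matrix.one_apply, h, h2, Prod.ext_iff]

lemma Jc_mul_transpose (α : Type*) [Fintype α] [DecidableEq α] :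
    ((Jmat α).map Complex.ofReal) * ((Jmat α).map Complex.ofReal)ᵀ = 1 := by
  have h1 : (Jmat α).map Complex.ofReal = (Jmat α).map (Complex.ofRealHom : ℝ →+* ℂ) := rfl
  rw [h1, ← Matrix.transpose_map, ← Matrix.map_mul, Jmat_mul_transpose,
    Matrix.map_one _ (map_zero _) (map_one _)]

end SSAaux

namespace SSAaux

section generic
variable {n m : Type*} [Fintype n] [Fintype m] [DecidableEq n] [DecidableEq m]

set_option linter.unusedSectionVars false

lemma aux_posDef_of_det_ne_zero {A : Matrix n n ℂ} (h : A.PosSemidef)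
    (hd : A.det ≠ 0) : A.PosDef := by
  refine Matrix.PosDef.of_dotProduct_mulVec_pos h.1 fun x hx => (h.dotProduct_mulVec_nonneg x).lt_of_ne fun h0 => hx ?_
  have hAx := (h.dotProduct_mulVec_zero_iff x).mp h0.symm
  have hinj : Function.Injective (A.mulVec) :=
    Matrix.mulVec_injective_iff_isUnit.mpr
      ((Matrix.isUnit_iff_isUnit_det A).mpr (isUnit_iff_ne_zero.mpr hd))
  apply hinj
  rw [hAx, Matrix.mulVec_zero]

lemma aux_posDef_submatrix {A : Matrix n n ℂ} (hA : A.PosDef) (f : m → n)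
    (hf : Function.Injective f) : (A.submatrix f f).PosDef := by
  refine Matrix.PosDef.of_dotProduct_mulVec_pos (hA.1.submatrix f) fun x hx => ?_
  set P : Matrix n m ℂ := (1 : Matrix n n ℂ).submatrix id f with hP
  have hsub : A.submatrix f f = Pᴴ * A * P := by
    ext k l
    simp [hP, Matrix.mul_apply, Matrix.one_apply, apply_ite]
  have hPx : P *ᵥ x ≠ 0 := by
    intro h0
    apply hx
    funext k
    have := congrFun h0 (f k)
    simpa [hP, Matrix.mulVec, dotProduct, Matrix.one_apply, hf.eq_iff] using this
  have := hA.dotProduct_mulVec_pos hPx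
  rw [hsub]
  simpa only [star_mulVec, Matrix.dotProduct_mulVec, Matrix.vecMul_vecMul] using this

lemma aux_det_le_one {X : Matrix n n ℂ} (hX : X.PosSemidef)
    (h1X : ((1 : Matrix n n ℂ) - X).PosSemidef) : X.det ≤ 1 := by
  have hXH : X.IsHermitian := hX.1
  have hev1 : ∀ i, hXH.eigenvalues i ≤ 1 := by
    intro i
    set v : n → ℂ := ⇑(hXH.eigenvectorBasis i) with hv
    have hnorm : star v ⬝ᵥ v = 1 := by
      have horth := hXH.eigenvectorBasis.orthonormal.1 i
      have : (inner ℂ (hXH.eigenvectorBasis i) (hXH.eigenvectorBasis i) : ℂ) = 1 := by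
        rw [@inner_self_eq_norm_sq_to_K ℂ]
        rw [horth]
        norm_num
      rwa [EuclideanSpace.inner_eq_star_dotProduct, dotProduct_comm] at this
    have hq := h1X.re_dotProduct_nonneg v
    rw [Matrix.sub_mulVec, Matrix.one_mulVec, dotProduct_sub, map_sub, hnorm] at hq
    have heig := hXH.eigenvalues_eq i
    rw [← hv] at heig
    rw [← heig] at hq
    simpa using hq
  have hev0 : ∀ i, 0 ≤ hXH.eigenvalues i := hX.eigenvalues_nonneg
  have h2 : (∏ i, hXH.eigenvalues i) ≤ 1 :=
    Finset.prod_le_one (fun i _ => hev0 i) (fun i _ => hev1 i)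
  rw [hXH.det_eq_prod_eigenvalues]
  calc (∏ i, (hXH.eigenvalues i : ℂ)) = ((∏ i, hXH.eigenvalues i : ℝ) : ℂ) := by
        push_cast; rfl
    _ ≤ 1 := by
        rw [show (1:ℂ) = ((1:ℝ):ℂ) by norm_num, Complex.real_le_real]; exact h2

open scoped MatrixOrder in
lemma aux_det_le_det {A B : Matrix n n ℂ} (hA : A.PosSemidef) (hB : B.PosDef)
    (h : (B - A).PosSemidef) : A.det ≤ B.det := by
  have hBpsd := hB.posSemidef
  set S := CFC.sqrt B with hSdef
  have hS : S.PosSemidef := (CFC.sqrt_nonneg B).posSemidef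
  have hSS : S * S = B := CFC.sqrt_mul_sqrt_self B hBpsd.nonneg
  have hdetS : S.det * S.det = B.det := by rw [← Matrix.det_mul, hSS]
  have hdS : S.det ≠ 0 := by
    intro h0
    rw [h0, mul_zero] at hdetS
    exact hB.det_pos.ne' hdetS.symm
  have hu : IsUnit S.det := isUnit_iff_ne_zero.mpr hdS
  have hSinvH : S⁻¹.IsHermitian := hS.1.inv
  have hX : (S⁻¹ * A * S⁻¹).PosSemidef := by
    have := hA.conjTranspose_mul_mul_same (B := S⁻¹)
    rwa [hSinvH.eq] at this
  have hBid : S⁻¹ * B * S⁻¹ = 1 := by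
    rw [← hSS, ← Matrix.mul_assoc, Matrix.nonsing_inv_mul _ hu, Matrix.one_mul,
      Matrix.mul_nonsing_inv _ hu]
  have h1X : ((1 : Matrix n n ℂ) - S⁻¹ * A * S⁻¹).PosSemidef := by
    have hps := h.conjTranspose_mul_mul_same (B := S⁻¹)
    rw [hSinvH.eq] at hps
    have : S⁻¹ * (B - A) * S⁻¹ = 1 - S⁻¹ * A * S⁻¹ := by
      rw [Matrix.mul_sub, Matrix.sub_mul, hBid]
    rwa [this] at hps
  have hdle := aux_det_le_one hX h1X
  have hAeq : A = S * (S⁻¹ * A * S⁻¹) * S := by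
    rw [Matrix.mul_assoc, Matrix.mul_assoc, Matrix.mul_assoc, Matrix.nonsing_inv_mul _ hu,
      Matrix.mul_one, ← Matrix.mul_assoc, Matrix.mul_nonsing_inv _ hu, Matrix.one_mul]
  calc A.det = S.det * (S⁻¹ * A * S⁻¹).det * S.det := by
        conv_lhs => rw [hAeq]
        rw [Matrix.det_mul, Matrix.det_mul]
    _ = B.det * (S⁻¹ * A * S⁻¹).det := by rw [← hdetS]; ring
    _ ≤ B.det * 1 := mul_le_mul_of_nonneg_left hdle hB.det_pos.le
    _ = B.det := mul_one _

lemma aux_posSemidef_of_two_smul {A : Matrix n n ℂ} (h : ((2:ℂ) • A).PosSemidef) :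
    A.PosSemidef := by
  refine Matrix.PosSemidef.of_dotProduct_mulVec_nonneg ?_ ?_
  · have h1 := h.1
    rw [Matrix.IsHermitian, Matrix.conjTranspose_smul] at h1
    have h2 : ((2:ℂ)) • Aᴴ = (2:ℂ) • A := by
      rw [show star (2:ℂ) = 2 by norm_num] at h1
      exact h1
    exact smul_right_injective (Matrix n n ℂ) (two_ne_zero) h2
  · intro x
    have h2 := h.dotProduct_mulVec_nonneg x
    rw [Matrix.smul_mulVec, dotProduct_smul, smul_eq_mul] at h2
    rw [Complex.le_def] at h2 ⊢
    constructor
    · have : (2 * (star x ⬝ᵥ A *ᵥ x)).re = 2 * (star x ⬝ᵥ A *ᵥ x).re := by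
        simp [Complex.mul_re]
      rw [this] at h2
      simp at h2 ⊢
      linarith [h2.1]
    · have : (2 * (star x ⬝ᵥ A *ᵥ x)).im = 2 * (star x ⬝ᵥ A *ᵥ x).im := by
        simp [Complex.mul_im]
      rw [this] at h2
      simp at h2 ⊢
      linarith [h2.2]

lemma aux_posDef_fromBlocks_diag {A : Matrix n n ℂ} {C : Matrix m m ℂ}
    (hA : A.PosDef) (hC : C.PosDef) :
    (Matrix.fromBlocks A 0 0 C).PosDef := by
  refine Matrix.PosDef.of_dotProduct_mulVec_pos ?_ ?_
  · have : (Matrix.fromBlocks A 0 0 C)ᴴ = Matrix.fromBlocks A 0 0 C := by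
      rw [Matrix.fromBlocks_conjTranspose]
      simp [hA.1.eq, hC.1.eq]
    exact this
  · intro x hx
    have hxe : x = Sum.elim (x ∘ Sum.inl) (x ∘ Sum.inr) := by
      funext p; rcases p with p | p <;> rfl
    have hq : star x ⬝ᵥ (Matrix.fromBlocks A 0 0 C) *ᵥ x =
        star (x ∘ Sum.inl) ⬝ᵥ A *ᵥ (x ∘ Sum.inl) +
        star (x ∘ Sum.inr) ⬝ᵥ C *ᵥ (x ∘ Sum.inr) := by
      conv_lhs => rw [hxe]
      rw [Matrix.fromBlocks_mulVec]
      simp only [Matrix.zero_mulVec, add_zero, zero_add, Sum.elim_comp_inl, Sum.elim_comp_inr]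
      rw [Function.star_sumElim, sumElim_dotProduct_sumElim]
    rw [hq]
    by_cases h1 : x ∘ Sum.inl ≠ 0
    · exact add_pos_of_pos_of_nonneg (hA.dotProduct_mulVec_pos h1) (hC.posSemidef.dotProduct_mulVec_nonneg _)
    · push_neg at h1
      have h2 : x ∘ Sum.inr ≠ 0 := by
        intro h2
        apply hx
        funext p
        rcases p with p | p
        · exact congrFun h1 p
        · exact congrFun h2 p
      exact add_pos_of_nonneg_of_pos (hA.posSemidef.dotProduct_mulVec_nonneg _) (hC.dotProduct_mulVec_pos h2)

end generic
end SSAaux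

namespace SSAaux
section main

variable {nA nB nC : ℕ}

abbrev ιI (nA nB nC : ℕ) := (Fin nA ⊕ Fin nB ⊕ Fin nC) × Fin 2

abbrev gA : Fin nA × Fin 2 → ιI nA nB nC := fun p => (Sum.inl p.1, p.2)
abbrev gB : Fin nB × Fin 2 → ιI nA nB nC := fun p => (Sum.inr (Sum.inl p.1), p.2)
abbrev gC : Fin nC × Fin 2 → ιI nA nB nC := fun p => (Sum.inr (Sum.inr p.1), p.2)

variable (V : Matrix (ιI nA nB nC) (ιI nA nB nC) ℝ)

abbrev Vc : Matrix (ιI nA nB nC) (ιI nA nB nC) ℂ := V.map Complex.ofReal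

abbrev Jca (nA nB nC : ℕ) : Matrix (ιI nA nB nC) (ιI nA nB nC) ℂ :=
  (Jmat (Fin nA ⊕ Fin nB ⊕ Fin nC)).map Complex.ofReal

abbrev AAm := (Vc V).submatrix (gA (nB := nB) (nC := nC)) (gA (nB := nB) (nC := nC))
abbrev ABm := (Vc V).submatrix (gA (nB := nB) (nC := nC)) (gB (nA := nA) (nC := nC))
abbrev BBm := (Vc V).submatrix (gB (nA := nA) (nC := nC)) (gB (nA := nA) (nC := nC))
abbrev CBm := (Vc V).submatrix (gC (nA := nA) (nB := nB)) (gB (nA := nA) (nC := nC))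
abbrev CCm := (Vc V).submatrix (gC (nA := nA) (nB := nB)) (gC (nA := nA) (nB := nB))
abbrev Km (nA nB nC : ℕ) : Matrix (Fin nB × Fin 2) (Fin nB × Fin 2) ℂ :=
  Complex.I • ((Jca nA nB nC).submatrix (gB (nA := nA) (nC := nC)) (gB (nA := nA) (nC := nC)))

abbrev Mm := BBm V - (ABm V)ᴴ * (AAm V)⁻¹ * (ABm V)
abbrev Nm := BBm V - (CBm V)ᴴ * (CCm V)⁻¹ * (CBm V)

variable {V}

lemma hVs (hsymm : V.IsSymm) : ∀ u v, V v u = V u v :=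
  fun u v => congrFun (congrFun hsymm u) v

lemma hVcH (hsymm : V.IsSymm) : (Vc V).IsHermitian := by
  ext u v
  simp only [Matrix.conjTranspose_apply, Matrix.map_apply, Complex.star_def,
    Complex.conj_ofReal]
  rw [hVs hsymm v u]

lemma hWpsd (hbf : BonaFide V) : (Vc V + Complex.I • Jca nA nB nC).PosSemidef := hbf

lemma hWtpsd (hsymm : V.IsSymm) (hbf : BonaFide V) :
    (Vc V - Complex.I • Jca nA nB nC).PosSemidef := by
  have hVcT : (Vc V)ᵀ = Vc V := by
    ext u v
    simp only [Matrix.transpose_apply, Matrix.map_apply]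
    rw [hVs hsymm v u]
  have hJcT : (Jca nA nB nC)ᵀ = -(Jca nA nB nC) := by
    ext u v
    simp only [Matrix.transpose_apply, Matrix.map_apply, Matrix.neg_apply]
    have h := congrFun (congrFun (Jmat_transpose (Fin nA ⊕ Fin nB ⊕ Fin nC)) v) u
    simp only [Matrix.transpose_apply, Matrix.neg_apply] at h
    rw [h]
    push_cast; ring
  have hWT : (Vc V + Complex.I • Jca nA nB nC)ᵀ = Vc V - Complex.I • Jca nA nB nC := by
    rw [Matrix.transpose_add, Matrix.transpose_smul, hJcT, hVcT, smul_neg, sub_eq_add_neg]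
  exact hWT ▸ (hWpsd hbf).transpose

lemma hVcPD (hsymm : V.IsSymm) (hbf : BonaFide V) : (Vc V).PosDef := by
  have hW := hWpsd hbf
  have hWt := hWtpsd hsymm hbf
  have hVcPSD : (Vc V).PosSemidef := by
    apply aux_posSemidef_of_two_smul
    have h2 : (Vc V + Complex.I • Jca nA nB nC) + (Vc V - Complex.I • Jca nA nB nC)
        = (2:ℂ) • Vc V := by
      rw [two_smul]; abel
    rw [← h2]
    exact hW.add hWt
  have hJcJcT : Jca nA nB nC * (Jca nA nB nC)ᵀ = 1 := Jc_mul_transpose _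
  have hJcker : ∀ x : ιI nA nB nC → ℂ, Jca nA nB nC *ᵥ x = 0 → x = 0 := by
    intro x hx
    have h2 : (Jca nA nB nC)ᵀ * Jca nA nB nC = 1 := mul_eq_one_comm.mp hJcJcT
    have h3 : ((Jca nA nB nC)ᵀ * Jca nA nB nC) *ᵥ x = (Jca nA nB nC)ᵀ *ᵥ (Jca nA nB nC *ᵥ x) :=
      (Matrix.mulVec_mulVec _ _ _).symm
    rw [h2, Matrix.one_mulVec, hx, Matrix.mulVec_zero] at h3
    exact h3
  refine Matrix.PosDef.of_dotProduct_mulVec_pos (hVcH hsymm) fun x hx => (hVcPSD.dotProduct_mulVec_nonneg x).lt_of_ne fun h0 => hx ?_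
  have hVx : Vc V *ᵥ x = 0 := (hVcPSD.dotProduct_mulVec_zero_iff x).mp h0.symm
  set c : ℂ := star x ⬝ᵥ Jca nA nB nC *ᵥ x with hc
  have hq1 : star x ⬝ᵥ (Vc V + Complex.I • Jca nA nB nC) *ᵥ x = Complex.I * c := by
    rw [Matrix.add_mulVec, dotProduct_add, hVx, Matrix.smul_mulVec,
      dotProduct_smul]
    simp [hc]
  have hq2 : star x ⬝ᵥ (Vc V - Complex.I • Jca nA nB nC) *ᵥ x = -(Complex.I * c) := by
    rw [Matrix.sub_mulVec, dotProduct_sub, hVx, Matrix.smul_mulVec,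
      dotProduct_smul]
    simp [hc]
  have hle1 := hW.dotProduct_mulVec_nonneg x
  have hle2 := hWt.dotProduct_mulVec_nonneg x
  rw [hq1] at hle1
  rw [hq2] at hle2
  have hIc : Complex.I * c = 0 := le_antisymm (by simpa using neg_nonneg.mp (by simpa using hle2)) hle1
  have hq0 : star x ⬝ᵥ (Vc V + Complex.I • Jca nA nB nC) *ᵥ x = 0 := by rw [hq1, hIc]
  have hWx : (Vc V + Complex.I • Jca nA nB nC) *ᵥ x = 0 :=
    (hW.dotProduct_mulVec_zero_iff x).mp hq0
  have hJx : Complex.I • (Jca nA nB nC *ᵥ x) = 0 := by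
    rw [Matrix.add_mulVec, hVx, zero_add, Matrix.smul_mulVec] at hWx
    exact hWx
  have hJx0 : Jca nA nB nC *ᵥ x = 0 := by
    rcases smul_eq_zero.mp hJx with h | h
    · exact absurd h Complex.I_ne_zero
    · exact h
  exact hJcker x hJx0

end main
end SSAaux

namespace SSAaux
section main2
variable {nA nB nC : ℕ} {V : Matrix (ιI nA nB nC) (ιI nA nB nC) ℝ}

lemma hQpsd (hsymm : V.IsSymm) (hbf : BonaFide V) :
    (Matrix.fromBlocks
       (Matrix.fromBlocks (AAm V) 0 0 (CCm V))
       (Matrix.fromBlocks (ABm V) 0 0 (CBm V))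
       (Matrix.fromBlocks (ABm V) 0 0 (CBm V))ᴴ
       (Matrix.fromBlocks (BBm V) (Km nA nB nC) (Km nA nB nC) (BBm V))).PosSemidef := by
  have hW := hWpsd hbf
  have hWt := hWtpsd hsymm hbf
  set g : ((Fin nA × Fin 2 ⊕ Fin nC × Fin 2) ⊕ (Fin nB × Fin 2 ⊕ Fin nB × Fin 2)) → ιI nA nB nC :=
    Sum.elim (Sum.elim (gA (nB := nB) (nC := nC)) (gC (nA := nA) (nB := nB)))
      (Sum.elim (gB (nA := nA) (nC := nC)) (gB (nA := nA) (nC := nC))) with hg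
  set s : ((Fin nA × Fin 2 ⊕ Fin nC × Fin 2) ⊕ (Fin nB × Fin 2 ⊕ Fin nB × Fin 2)) → ℂ :=
    Sum.elim (Sum.elim (fun _ => 1) (fun _ => -1)) (Sum.elim (fun _ => 1) (fun _ => -1)) with hs
  apply aux_posSemidef_of_two_smul
  have hG : ((Vc V + Complex.I • Jca nA nB nC).submatrix g g).PosSemidef := hW.submatrix g
  have hsstar : (Matrix.diagonal s)ᴴ = Matrix.diagonal s := by
    have hss : star s = s := by
      funext p
      rcases p with (p | p) | (p | p) <;> simp [hs]
    rw [Matrix.diagonal_conjTranspose, hss]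
  have hG2 : (Matrix.diagonal s * ((Vc V - Complex.I • Jca nA nB nC).submatrix g g)
      * Matrix.diagonal s).PosSemidef := by
    have := (hWt.submatrix g).conjTranspose_mul_mul_same (B := Matrix.diagonal s)
    rwa [hsstar] at this
  have key : (2:ℂ) • (Matrix.fromBlocks
       (Matrix.fromBlocks (AAm V) 0 0 (CCm V))
       (Matrix.fromBlocks (ABm V) 0 0 (CBm V))
       (Matrix.fromBlocks (ABm V) 0 0 (CBm V))ᴴ
       (Matrix.fromBlocks (BBm V) (Km nA nB nC) (Km nA nB nC) (BBm V)))
      = (Vc V + Complex.I • Jca nA nB nC).submatrix g g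
        + Matrix.diagonal s * ((Vc V - Complex.I • Jca nA nB nC).submatrix g g)
          * Matrix.diagonal s := by
    have hVs' := hVs hsymm
    ext p q
    rcases p with (⟨a, i⟩ | ⟨c, i⟩) | (⟨b, i⟩ | ⟨b, i⟩) <;>
      rcases q with (⟨a', j⟩ | ⟨c', j⟩) | (⟨b', j⟩ | ⟨b', j⟩) <;>
      simp only [hg, hs, Matrix.smul_apply, Matrix.add_apply, Matrix.sub_apply,
        Matrix.mul_diagonal, Matrix.diagonal_mul, Matrix.submatrix_apply, Sum.elim_inl,
        Sum.elim_inr, Matrix.fromBlocks_apply₁₁, Matrix.fromBlocks_apply₁₂,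
        Matrix.fromBlocks_apply₂₁, Matrix.fromBlocks_apply₂₂, Matrix.conjTranspose_apply,
        Matrix.map_apply, Matrix.zero_apply, Jmat, smul_eq_mul, Complex.conj_ofReal,
        Matrix.star_apply, reduceCtorEq, if_false, Complex.ofReal_zero, star_zero,
        Complex.star_def] <;>
      first
        | ring1
        | (rw [hVs' (gB (b, i)) (gA (a', j))]; ring1)
        | (rw [hVs' (gB (b, i)) (gC (c', j))]; ring1)
        | (simp only [Sum.inr.injEq, reduceCtorEq, if_false, Complex.ofReal_zero]; ring1)
  rw [key]
  exact hG.add hG2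

end main2
end SSAaux

namespace SSAaux
section main3
variable {nA nB nC : ℕ} {V : Matrix (ιI nA nB nC) (ιI nA nB nC) ℝ}

lemma hinjA : Function.Injective (gA (nA := nA) (nB := nB) (nC := nC)) := by
  intro p q h
  simpa [Prod.ext_iff, gA] using h

lemma hinjB : Function.Injective (gB (nA := nA) (nB := nB) (nC := nC)) := by
  intro p q h
  simpa [Prod.ext_iff, gB] using h

lemma hinjC : Function.Injective (gC (nA := nA) (nB := nB) (nC := nC)) := by
  intro p q h
  simpa [Prod.ext_iff, gC] using h

lemma hinjAB : Function.Injective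
    (Sum.elim (gA (nA := nA) (nB := nB) (nC := nC)) (gB (nA := nA) (nB := nB) (nC := nC))) := by
  apply Function.Injective.sumElim hinjA hinjB
  intro a b
  simp [gA, gB, Prod.ext_iff]

lemma hinjCB : Function.Injective
    (Sum.elim (gC (nA := nA) (nB := nB) (nC := nC)) (gB (nA := nA) (nB := nB) (nC := nC))) := by
  apply Function.Injective.sumElim hinjC hinjB
  intro a b
  simp [gC, gB, Prod.ext_iff]

variable (hsymm : V.IsSymm) (hbf : BonaFide V)
include hsymm hbf

lemma hAApd : (AAm V).PosDef := aux_posDef_submatrix (hVcPD hsymm hbf) _ hinjA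
lemma hBBpd : (BBm V).PosDef := aux_posDef_submatrix (hVcPD hsymm hbf) _ hinjB
lemma hCCpd : (CCm V).PosDef := aux_posDef_submatrix (hVcPD hsymm hbf) _ hinjC
lemma hGABpd : ((Vc V).submatrix (Sum.elim gA gB) (Sum.elim gA gB)).PosDef :=
  aux_posDef_submatrix (hVcPD hsymm hbf) _ hinjAB
lemma hGCBpd : ((Vc V).submatrix (Sum.elim gC gB) (Sum.elim gC gB)).PosDef :=
  aux_posDef_submatrix (hVcPD hsymm hbf) _ hinjCB

lemma hABH : (ABm V)ᴴ = (Vc V).submatrix (gB (nA := nA) (nC := nC)) (gA (nB := nB) (nC := nC)) := by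
  ext p q
  simp only [Matrix.conjTranspose_apply, Matrix.submatrix_apply, Matrix.map_apply,
    Complex.star_def, Complex.conj_ofReal]
  rw [hVs hsymm (gB p) (gA q)]

lemma hCBH : (CBm V)ᴴ = (Vc V).submatrix (gB (nA := nA) (nC := nC)) (gC (nA := nA) (nB := nB)) := by
  ext p q
  simp only [Matrix.conjTranspose_apply, Matrix.submatrix_apply, Matrix.map_apply,
    Complex.star_def, Complex.conj_ofReal]
  rw [hVs hsymm (gB p) (gC q)]

lemma hGABeq : (Vc V).submatrix (Sum.elim gA gB) (Sum.elim gA gB)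
    = Matrix.fromBlocks (AAm V) (ABm V) (ABm V)ᴴ (BBm V) := by
  rw [hABH hsymm hbf]
  ext p q
  rcases p with p | p <;> rcases q with q | q <;> rfl

lemma hGCBeq : (Vc V).submatrix (Sum.elim gC gB) (Sum.elim gC gB)
    = Matrix.fromBlocks (CCm V) (CBm V) (CBm V)ᴴ (BBm V) := by
  rw [hCBH hsymm hbf]
  ext p q
  rcases p with p | p <;> rcases q with q | q <;> rfl

lemma hMfacts : (Mm V).PosDef ∧
    ((Vc V).submatrix (Sum.elim gA gB) (Sum.elim gA gB)).det = (AAm V).det * (Mm V).det := by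
  have hAA := hAApd hsymm hbf
  haveI : Invertible (AAm V) :=
    (AAm V).invertibleOfIsUnitDet (isUnit_iff_ne_zero.mpr hAA.det_pos.ne')
  have hpsd : (Matrix.fromBlocks (AAm V) (ABm V) (ABm V)ᴴ (BBm V)).PosSemidef := by
    rw [← hGABeq hsymm hbf]
    exact (hVcPD hsymm hbf).posSemidef.submatrix _
  have hMpsd : (Mm V).PosSemidef :=
    (Matrix.PosDef.fromBlocks₁₁ (ABm V) (BBm V) hAA).mp hpsd
  have hdet : ((Vc V).submatrix (Sum.elim gA gB) (Sum.elim gA gB)).det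
      = (AAm V).det * (Mm V).det := by
    rw [hGABeq hsymm hbf, Matrix.det_fromBlocks₁₁, Matrix.invOf_eq_nonsing_inv]
  have hMdet : (Mm V).det ≠ 0 := by
    intro h0
    have := (hGABpd hsymm hbf).det_pos.ne'
    rw [hdet, h0, mul_zero] at this
    exact this rfl
  exact ⟨aux_posDef_of_det_ne_zero hMpsd hMdet, hdet⟩

lemma hNfacts : (Nm V).PosDef ∧
    ((Vc V).submatrix (Sum.elim gC gB) (Sum.elim gC gB)).det = (CCm V).det * (Nm V).det := by
  have hCC := hCCpd hsymm hbf
  haveI : Invertible (CCm V) :=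
    (CCm V).invertibleOfIsUnitDet (isUnit_iff_ne_zero.mpr hCC.det_pos.ne')
  have hpsd : (Matrix.fromBlocks (CCm V) (CBm V) (CBm V)ᴴ (BBm V)).PosSemidef := by
    rw [← hGCBeq hsymm hbf]
    exact (hVcPD hsymm hbf).posSemidef.submatrix _
  have hNpsd : (Nm V).PosSemidef :=
    (Matrix.PosDef.fromBlocks₁₁ (CBm V) (BBm V) hCC).mp hpsd
  have hdet : ((Vc V).submatrix (Sum.elim gC gB) (Sum.elim gC gB)).det
      = (CCm V).det * (Nm V).det := by
    rw [hGCBeq hsymm hbf, Matrix.det_fromBlocks₁₁, Matrix.invOf_eq_nonsing_inv]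
  have hNdet : (Nm V).det ≠ 0 := by
    intro h0
    have := (hGCBpd hsymm hbf).det_pos.ne'
    rw [hdet, h0, mul_zero] at this
    exact this rfl
  exact ⟨aux_posDef_of_det_ne_zero hNpsd hNdet, hdet⟩

end main3
end SSAaux

namespace SSAaux
section main4
variable {nA nB nC : ℕ} {V : Matrix (ιI nA nB nC) (ιI nA nB nC) ℝ}

lemma hKH : (Km nA nB nC)ᴴ = Km nA nB nC := by
  ext p q
  simp only [Matrix.conjTranspose_apply, Matrix.smul_apply, Matrix.submatrix_apply,
    Matrix.map_apply, smul_eq_mul, star_mul', Complex.star_def, Complex.conj_ofReal,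
    Complex.conj_I]
  have h := congrFun (congrFun (Jmat_transpose (Fin nA ⊕ Fin nB ⊕ Fin nC)) (gB p)) (gB q)
  simp only [Matrix.transpose_apply, Matrix.neg_apply] at h
  rw [h]
  push_cast
  ring

lemma hJcB : (Jca nA nB nC).submatrix (gB (nA := nA) (nC := nC)) (gB (nA := nA) (nC := nC))
    = (Jmat (Fin nB)).map Complex.ofReal := by
  ext ⟨b, i⟩ ⟨b', j⟩
  by_cases h : b = b' <;> simp [Jmat, h]

lemma hdetK2 : (Km nA nB nC).det * (Km nA nB nC).det = 1 := by
  have h1 : (Km nA nB nC).det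
      = Complex.I ^ (Fintype.card (Fin nB × Fin 2)) * ((Jca nA nB nC).submatrix gB gB).det :=
    Matrix.det_smul _ _
  have hJJ : ((Jca nA nB nC).submatrix gB gB).det * ((Jca nA nB nC).submatrix gB gB).det = 1 := by
    have h2 : ((Jca nA nB nC).submatrix gB gB) * ((Jca nA nB nC).submatrix gB gB)ᵀ = 1 := by
      rw [hJcB]
      exact Jc_mul_transpose (Fin nB)
    have h3 := congrArg Matrix.det h2
    rwa [Matrix.det_mul, Matrix.det_transpose, Matrix.det_one] at h3
  have hcard : Fintype.card (Fin nB × Fin 2) = nB * 2 := by simp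
  rw [h1]
  have hI : (Complex.I ^ (Fintype.card (Fin nB × Fin 2)))
      * (Complex.I ^ (Fintype.card (Fin nB × Fin 2))) = Complex.I ^ (nB * 4) := by
    rw [hcard, ← pow_add]
    congr 1
    ring
  have hI4 : Complex.I ^ (nB * 4) = 1 := by
    rw [mul_comm, pow_mul, Complex.I_pow_four, one_pow]
  calc (Complex.I ^ (Fintype.card (Fin nB × Fin 2)) * ((Jca nA nB nC).submatrix gB gB).det)
        * (Complex.I ^ (Fintype.card (Fin nB × Fin 2)) * ((Jca nA nB nC).submatrix gB gB).det)
      = (Complex.I ^ (Fintype.card (Fin nB × Fin 2)) * Complex.I ^ (Fintype.card (Fin nB × Fin 2)))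
        * (((Jca nA nB nC).submatrix gB gB).det * ((Jca nA nB nC).submatrix gB gB).det) := by ring
    _ = 1 := by rw [hI, hI4, hJJ, one_mul]

variable (hsymm : V.IsSymm) (hbf : BonaFide V)
include hsymm hbf

lemma key_ineq : 1 ≤ (Mm V).det * (Nm V).det := by
  have hAA := hAApd hsymm hbf
  have hCC := hCCpd hsymm hbf
  have hMpd := (hMfacts hsymm hbf).1
  have hNpd := (hNfacts hsymm hbf).1
  haveI : Invertible (AAm V) :=
    (AAm V).invertibleOfIsUnitDet (isUnit_iff_ne_zero.mpr hAA.det_pos.ne')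
  haveI : Invertible (CCm V) :=
    (CCm V).invertibleOfIsUnitDet (isUnit_iff_ne_zero.mpr hCC.det_pos.ne')
  have hDmpd := aux_posDef_fromBlocks_diag hAA hCC
  haveI hDmInv : Invertible (Matrix.fromBlocks (AAm V) 0 0 (CCm V)) :=
    (Matrix.fromBlocks (AAm V) 0 0 (CCm V)).invertibleOfIsUnitDet
      (isUnit_iff_ne_zero.mpr hDmpd.det_pos.ne')
  -- inverse of the diagonal block matrix
  have hDminv : (Matrix.fromBlocks (AAm V) 0 0 (CCm V))⁻¹
      = Matrix.fromBlocks (AAm V)⁻¹ 0 0 (CCm V)⁻¹ := by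
    apply Matrix.inv_eq_right_inv
    rw [Matrix.fromBlocks_multiply]
    simp only [Matrix.mul_zero, Matrix.zero_mul, add_zero, zero_add,
      Matrix.mul_nonsing_inv _ (isUnit_iff_ne_zero.mpr hAA.det_pos.ne'),
      Matrix.mul_nonsing_inv _ (isUnit_iff_ne_zero.mpr hCC.det_pos.ne')]
    exact Matrix.fromBlocks_one
  have hQ := hQpsd hsymm hbf
  have hSch1 := (Matrix.PosDef.fromBlocks₁₁
      (Matrix.fromBlocks (ABm V) 0 0 (CBm V))
      (Matrix.fromBlocks (BBm V) (Km nA nB nC) (Km nA nB nC) (BBm V)) hDmpd).mp hQ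
  have hEH : (Matrix.fromBlocks (ABm V) 0 0 (CBm V))ᴴ
      = Matrix.fromBlocks (ABm V)ᴴ 0 0 (CBm V)ᴴ := by
    rw [Matrix.fromBlocks_conjTranspose]
    simp
  have hprod : (Matrix.fromBlocks (ABm V) 0 0 (CBm V))ᴴ
        * (Matrix.fromBlocks (AAm V) 0 0 (CCm V))⁻¹
        * (Matrix.fromBlocks (ABm V) 0 0 (CBm V))
      = Matrix.fromBlocks ((ABm V)ᴴ * (AAm V)⁻¹ * (ABm V)) 0 0
          ((CBm V)ᴴ * (CCm V)⁻¹ * (CBm V)) := by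
    rw [hEH, hDminv, Matrix.fromBlocks_multiply, Matrix.fromBlocks_multiply]
    simp [Matrix.mul_zero, Matrix.zero_mul]
  rw [hprod] at hSch1
  have hsub : Matrix.fromBlocks (BBm V) (Km nA nB nC) (Km nA nB nC) (BBm V)
        - Matrix.fromBlocks ((ABm V)ᴴ * (AAm V)⁻¹ * (ABm V)) 0 0
            ((CBm V)ᴴ * (CCm V)⁻¹ * (CBm V))
      = Matrix.fromBlocks (Mm V) (Km nA nB nC) (Km nA nB nC)ᴴ (Nm V) := by
    rw [hKH]
    ext p q
    rcases p with p | p <;> rcases q with q | q <;>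
      simp [Matrix.sub_apply]
  rw [hsub] at hSch1
  haveI : Invertible (Mm V) :=
    (Mm V).invertibleOfIsUnitDet (isUnit_iff_ne_zero.mpr hMpd.det_pos.ne')
  have hSch2 := (Matrix.PosDef.fromBlocks₁₁ (Km nA nB nC) (Nm V) hMpd).mp hSch1
  have hRpsd : ((Km nA nB nC)ᴴ * (Mm V)⁻¹ * (Km nA nB nC)).PosSemidef :=
    (hMpd.posSemidef.inv).conjTranspose_mul_mul_same _
  have hRdet : ((Km nA nB nC)ᴴ * (Mm V)⁻¹ * (Km nA nB nC)).det = ((Mm V).det)⁻¹ := by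
    rw [Matrix.det_mul, Matrix.det_mul, hKH, Matrix.det_nonsing_inv, Ring.inverse_eq_inv]
    calc (Km nA nB nC).det * ((Mm V).det)⁻¹ * (Km nA nB nC).det
        = ((Km nA nB nC).det * (Km nA nB nC).det) * ((Mm V).det)⁻¹ := by ring
      _ = ((Mm V).det)⁻¹ := by rw [hdetK2, one_mul]
  have hdetle := aux_det_le_det hRpsd hNpd hSch2
  rw [hRdet] at hdetle
  have := mul_le_mul_of_nonneg_left hdetle hMpd.det_pos.le
  rwa [mul_inv_cancel₀ hMpd.det_pos.ne'] at this

end main4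
end SSAaux

open SSAaux in
/-- **Strong subadditivity for the log-determinant of covariance matrices.**
For any bona fide covariance matrix of a system of `nA + nB + nC` modes,
`log det V_{AB} + log det V_{BC} - log det V_A - log det V_C ≥ 0`. -/
theorem ssa_logdet_covariance (nA nB nC : ℕ) (hA : 0 < nA) (hB : 0 < nB) (hC : 0 < nC)
    (V : Matrix ((Fin nA ⊕ Fin nB ⊕ Fin nC) × Fin 2) ((Fin nA ⊕ Fin nB ⊕ Fin nC) × Fin 2) ℝ)
    (hsymm : V.IsSymm) (hbf : BonaFide V) :
    0 ≤ Real.log ((V.submatrix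
            (fun p : (Fin nA ⊕ Fin nB) × Fin 2 => (Sum.map id Sum.inl p.1, p.2))
            (fun p : (Fin nA ⊕ Fin nB) × Fin 2 => (Sum.map id Sum.inl p.1, p.2))).det)
        + Real.log ((V.submatrix
            (fun p : (Fin nB ⊕ Fin nC) × Fin 2 => (Sum.inr p.1, p.2))
            (fun p : (Fin nB ⊕ Fin nC) × Fin 2 => (Sum.inr p.1, p.2))).det)
        - Real.log ((V.submatrix
            (fun p : Fin nA × Fin 2 => (Sum.inl p.1, p.2))
            (fun p : Fin nA × Fin 2 => (Sum.inl p.1, p.2))).det)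
        - Real.log ((V.submatrix
            (fun p : Fin nC × Fin 2 => (Sum.inr (Sum.inr p.1), p.2))
            (fun p : Fin nC × Fin 2 => (Sum.inr (Sum.inr p.1), p.2))).det) := by
  classical
  -- transfer of determinants to ℂ
  have hmapdet : ∀ {κ : Type} [inst : Fintype κ] [inst2 : DecidableEq κ]
      (M : Matrix κ κ ℝ), (M.map Complex.ofReal).det = (M.det : ℂ) := by
    intro κ _ _ M
    exact ((Complex.ofRealHom : ℝ →+* ℂ).map_det M).symm
  have hABmap : (Vc V).submatrix (Sum.elim gA gB) (Sum.elim gA gB)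
      = ((V.submatrix
            (fun p : (Fin nA ⊕ Fin nB) × Fin 2 => (Sum.map id Sum.inl p.1, p.2))
            (fun p : (Fin nA ⊕ Fin nB) × Fin 2 => (Sum.map id Sum.inl p.1, p.2))).map
          Complex.ofReal).submatrix ((Equiv.sumProdDistrib (Fin nA) (Fin nB) (Fin 2)).symm) ((Equiv.sumProdDistrib (Fin nA) (Fin nB) (Fin 2)).symm) := by
    ext p q
    rcases p with ⟨a, i⟩ | ⟨b, i⟩ <;> rcases q with ⟨a', j⟩ | ⟨b', j⟩ <;>
      simp [Equiv.sumProdDistrib_symm_apply_left, Equiv.sumProdDistrib_symm_apply_right, gA, gB]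
  have hCBmap : (Vc V).submatrix (Sum.elim gC gB) (Sum.elim gC gB)
      = ((V.submatrix
            (fun p : (Fin nB ⊕ Fin nC) × Fin 2 => (Sum.inr p.1, p.2))
            (fun p : (Fin nB ⊕ Fin nC) × Fin 2 => (Sum.inr p.1, p.2))).map
          Complex.ofReal).submatrix ((Equiv.sumComm (Fin nC × Fin 2) (Fin nB × Fin 2)).trans (Equiv.sumProdDistrib (Fin nB) (Fin nC) (Fin 2)).symm) ((Equiv.sumComm (Fin nC × Fin 2) (Fin nB × Fin 2)).trans (Equiv.sumProdDistrib (Fin nB) (Fin nC) (Fin 2)).symm) := by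
    ext p q
    rcases p with ⟨c, i⟩ | ⟨b, i⟩ <;> rcases q with ⟨c', j⟩ | ⟨b', j⟩ <;>
      simp [Equiv.sumProdDistrib_symm_apply_left, Equiv.sumProdDistrib_symm_apply_right, Equiv.sumComm_apply, gC, gB]
  have hAmap : AAm V = (V.submatrix
      (fun p : Fin nA × Fin 2 => (Sum.inl p.1, p.2))
      (fun p : Fin nA × Fin 2 => (Sum.inl p.1, p.2))).map Complex.ofReal := rfl
  have hCmap : CCm V = (V.submatrix
      (fun p : Fin nC × Fin 2 => (Sum.inr (Sum.inr p.1), p.2))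
      (fun p : Fin nC × Fin 2 => (Sum.inr (Sum.inr p.1), p.2))).map Complex.ofReal := rfl
  -- complex determinant identities
  have hdAB : ((Vc V).submatrix (Sum.elim gA gB) (Sum.elim gA gB)).det
      = ((V.submatrix
            (fun p : (Fin nA ⊕ Fin nB) × Fin 2 => (Sum.map id Sum.inl p.1, p.2))
            (fun p : (Fin nA ⊕ Fin nB) × Fin 2 => (Sum.map id Sum.inl p.1, p.2))).det : ℂ) := by
    rw [hABmap, Matrix.det_submatrix_equiv_self, hmapdet]
  have hdCB : ((Vc V).submatrix (Sum.elim gC gB) (Sum.elim gC gB)).det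
      = ((V.submatrix
            (fun p : (Fin nB ⊕ Fin nC) × Fin 2 => (Sum.inr p.1, p.2))
            (fun p : (Fin nB ⊕ Fin nC) × Fin 2 => (Sum.inr p.1, p.2))).det : ℂ) := by
    rw [hCBmap, Matrix.det_submatrix_equiv_self, hmapdet]
  have hdA : (AAm V).det = ((V.submatrix
      (fun p : Fin nA × Fin 2 => (Sum.inl p.1, p.2))
      (fun p : Fin nA × Fin 2 => (Sum.inl p.1, p.2))).det : ℂ) := by
    rw [hAmap, hmapdet]
  have hdC : (CCm V).det = ((V.submatrix
      (fun p : Fin nC × Fin 2 => (Sum.inr (Sum.inr p.1), p.2))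
      (fun p : Fin nC × Fin 2 => (Sum.inr (Sum.inr p.1), p.2))).det : ℂ) := by
    rw [hCmap, hmapdet]
  -- positivity of the real determinants
  have hposAB : (0:ℝ) < (V.submatrix
      (fun p : (Fin nA ⊕ Fin nB) × Fin 2 => (Sum.map id Sum.inl p.1, p.2))
      (fun p : (Fin nA ⊕ Fin nB) × Fin 2 => (Sum.map id Sum.inl p.1, p.2))).det := by
    have := (hGABpd hsymm hbf).det_pos
    rw [hdAB] at this
    exact Complex.zero_lt_real.mp this
  have hposCB : (0:ℝ) < (V.submatrix
      (fun p : (Fin nB ⊕ Fin nC) × Fin 2 => (Sum.inr p.1, p.2))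
      (fun p : (Fin nB ⊕ Fin nC) × Fin 2 => (Sum.inr p.1, p.2))).det := by
    have := (hGCBpd hsymm hbf).det_pos
    rw [hdCB] at this
    exact Complex.zero_lt_real.mp this
  have hposA : (0:ℝ) < (V.submatrix
      (fun p : Fin nA × Fin 2 => (Sum.inl p.1, p.2))
      (fun p : Fin nA × Fin 2 => (Sum.inl p.1, p.2))).det := by
    have := (hAApd hsymm hbf).det_pos
    rw [hdA] at this
    exact Complex.zero_lt_real.mp this
  have hposC : (0:ℝ) < (V.submatrix
      (fun p : Fin nC × Fin 2 => (Sum.inr (Sum.inr p.1), p.2))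
      (fun p : Fin nC × Fin 2 => (Sum.inr (Sum.inr p.1), p.2))).det := by
    have := (hCCpd hsymm hbf).det_pos
    rw [hdC] at this
    exact Complex.zero_lt_real.mp this
  -- the main determinant inequality, over ℂ
  have hkey := key_ineq hsymm hbf
  have hMN1 := (hMfacts hsymm hbf).2
  have hMN2 := (hNfacts hsymm hbf).2
  have hprod : ((V.submatrix
        (fun p : Fin nA × Fin 2 => (Sum.inl p.1, p.2))
        (fun p : Fin nA × Fin 2 => (Sum.inl p.1, p.2))).det
      * (V.submatrix
        (fun p : Fin nC × Fin 2 => (Sum.inr (Sum.inr p.1), p.2))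
        (fun p : Fin nC × Fin 2 => (Sum.inr (Sum.inr p.1), p.2))).det : ℝ)
      ≤ (V.submatrix
        (fun p : (Fin nA ⊕ Fin nB) × Fin 2 => (Sum.map id Sum.inl p.1, p.2))
        (fun p : (Fin nA ⊕ Fin nB) × Fin 2 => (Sum.map id Sum.inl p.1, p.2))).det
      * (V.submatrix
        (fun p : (Fin nB ⊕ Fin nC) × Fin 2 => (Sum.inr p.1, p.2))
        (fun p : (Fin nB ⊕ Fin nC) × Fin 2 => (Sum.inr p.1, p.2))).det := by
    rw [← Complex.real_le_real]
    push_cast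
    rw [← hdAB, ← hdCB, ← hdA, ← hdC, hMN1, hMN2]
    calc (AAm V).det * (CCm V).det
        = ((AAm V).det * (CCm V).det) * 1 := by ring
      _ ≤ ((AAm V).det * (CCm V).det) * ((Mm V).det * (Nm V).det) := by
          apply mul_le_mul_of_nonneg_left hkey
          exact mul_nonneg (hAApd hsymm hbf).det_pos.le (hCCpd hsymm hbf).det_pos.le
      _ = (AAm V).det * (Mm V).det * ((CCm V).det * (Nm V).det) := by ring
  -- conclude via logarithms
  have hlog := Real.log_le_log (mul_pos hposA hposC) hprod
  rw [Real.log_mul hposA.ne' hposC.ne', Real.log_mul hposAB.ne' hposCB.ne'] at hlog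
  linarith

end
end

section
/- Concavity of the conditional log-determinant: Fix integers p, q ≥ 1 and for an (p+q)×(p+q) real symmetric positive definite matrix M let M_A denote its leading p×p principal submatrix. Then the function M ↦ log det M − log det M_A is concave on the set of (p+q)×(p+q) real symmetric positive definite matrices: for all such V, W and t ∈ [0,1], log det(tV+(1−t)W) − log det((tV+(1−t)W)_A) ≥ t·(log det V − log det V_A) + (1−t)·(log det W − log det W_A). -/
open Matrix

section helpers
variable {n : Type*} [Fintype n] [DecidableEq n]
open scoped MatrixOrder

lemma det_smul_one_add_smul {Z : Matrix n n ℝ} (hZ : Z.IsHermitian) (a b : ℝ) :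
    (a • (1 : Matrix n n ℝ) + b • Z).det = ∏ i, (a + b * hZ.eigenvalues i) := by
  set U : Matrix n n ℝ := (hZ.eigenvectorUnitary : Matrix n n ℝ) with hUdef
  have hU : U * star U = 1 := (Matrix.mem_unitaryGroup_iff).mp hZ.eigenvectorUnitary.2
  have hU' : star U * U = 1 := (Matrix.mem_unitaryGroup_iff').mp hZ.eigenvectorUnitary.2
  have key : a • (1 : Matrix n n ℝ) + b • Z
      = U * (diagonal (fun i => a + b * hZ.eigenvalues i)) * star U := by
    have hd : (diagonal (fun i => a + b * hZ.eigenvalues i))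
        = a • (1 : Matrix n n ℝ) + b • diagonal (RCLike.ofReal ∘ hZ.eigenvalues) := by
      ext i j
      by_cases h : i = j <;>
        simp [diagonal, h, Matrix.one_apply, RCLike.ofReal, Matrix.add_apply]
    rw [hd, Matrix.mul_add, Matrix.add_mul, Matrix.mul_smul, Matrix.mul_smul,
      Matrix.smul_mul, Matrix.smul_mul, Matrix.mul_one, hU]
    conv_lhs => rw [hZ.spectral_theorem]
    rw [Unitary.conjStarAlgAut_apply]
  rw [key, det_mul, det_mul, mul_comm, ← mul_assoc, ← det_mul, hU', det_one, one_mul,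
    det_diagonal]

lemma posDef_conj {P R : Matrix n n ℝ} (hP : P.PosDef) (hR : R.IsHermitian)
    (hRu : IsUnit R.det) : (R * P * R).PosDef := by
  refine Matrix.PosDef.of_dotProduct_mulVec_pos (by
    rw [Matrix.IsHermitian, conjTranspose_mul, conjTranspose_mul, hR.eq, hP.1.eq,
      Matrix.mul_assoc]) fun x hx => ?_
  have hinj : Function.Injective (R.mulVec) := by
    have := R.invertibleOfIsUnitDet hRu
    exact R.mulVec_injective_of_invertible
  have hy : R *ᵥ x ≠ 0 := fun h => hx (hinj (by simpa using h))
  have e : star x ⬝ᵥ (R * P * R) *ᵥ x = star (R *ᵥ x) ⬝ᵥ P *ᵥ (R *ᵥ x) := by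
    rw [← mulVec_mulVec, ← mulVec_mulVec, Matrix.dotProduct_mulVec (star x),
      star_mulVec, hR.eq]
  rw [e]
  exact hP.dotProduct_mulVec_pos hy

lemma sqrt_isUnit_det {Q : Matrix n n ℝ} (hQ : Q.PosDef) : IsUnit (CFC.sqrt Q).det := by
  have h : (CFC.sqrt Q).det * (CFC.sqrt Q).det = Q.det := by
    rw [← det_mul, CFC.sqrt_mul_sqrt_self Q (Matrix.nonneg_iff_posSemidef.mpr hQ.posSemidef)]
  have h2 := hQ.det_pos
  refine isUnit_iff_ne_zero.mpr (fun h0 => ?_)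
  rw [h0, mul_zero] at h
  exact h2.ne h

lemma det_mono {K X : Matrix n n ℝ} (hK : K.PosDef) (hXK : (X - K).PosSemidef) :
    K.det ≤ X.det := by
  set R := CFC.sqrt K with hRdef
  have hRh : R.IsHermitian := (Matrix.nonneg_iff_posSemidef.mp (CFC.sqrt_nonneg K)).1
  have hRu : IsUnit R.det := sqrt_isUnit_det hK
  have hRR : R * R = K := CFC.sqrt_mul_sqrt_self K (Matrix.nonneg_iff_posSemidef.mpr hK.posSemidef)
  have hRinv : R * R⁻¹ = 1 := mul_nonsing_inv R hRu
  have hRinv' : R⁻¹ * R = 1 := nonsing_inv_mul R hRu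
  set Z := R⁻¹ * (X - K) * R⁻¹ with hZdef
  have hZpsd : Z.PosSemidef := by
    have := hXK.conjTranspose_mul_mul_same R⁻¹
    rwa [hRh.inv.eq] at this
  have hmid : R * Z * R = X - K := by
    rw [hZdef, ← Matrix.mul_assoc, ← Matrix.mul_assoc, hRinv, Matrix.one_mul,
      Matrix.mul_assoc, hRinv', Matrix.mul_one]
  have hX : X = R * (1 + Z) * R := by
    rw [Matrix.mul_add, Matrix.add_mul, Matrix.mul_one, hRR, hmid]
    abel
  have hdet : X.det = K.det * (1 + Z).det := by
    rw [hX, det_mul, det_mul, ← hRR, det_mul]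
    ring
  have h1Z : (1 + Z).det = ∏ i, (1 + 1 * hZpsd.1.eigenvalues i) := by
    have := det_smul_one_add_smul hZpsd.1 1 1
    simpa using this
  have hge : (1:ℝ) ≤ (1 + Z).det := by
    rw [h1Z]
    calc (1:ℝ) = ∏ _i : n, (1:ℝ) := by simp
    _ ≤ ∏ i, (1 + 1 * hZpsd.1.eigenvalues i) := by
        apply Finset.prod_le_prod (fun i _ => zero_le_one)
        intro i _
        have := hZpsd.eigenvalues_nonneg i
        linarith
  rw [hdet]
  exact le_mul_of_one_le_right hK.det_pos.le hge

lemma posDef_comb {P Q : Matrix n n ℝ} (hP : P.PosDef) (hQ : Q.PosDef)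
    {t : ℝ} (ht0 : 0 ≤ t) (ht1 : t ≤ 1) : (t • P + (1 - t) • Q).PosDef := by
  refine Matrix.PosDef.of_dotProduct_mulVec_pos ?_ fun x hx => ?_
  · rw [Matrix.IsHermitian, conjTranspose_add, conjTranspose_smul, conjTranspose_smul,
      hP.1.eq, hQ.1.eq]
    simp
  · have e : star x ⬝ᵥ (t • P + (1 - t) • Q) *ᵥ x
        = t * (star x ⬝ᵥ P *ᵥ x) + (1 - t) * (star x ⬝ᵥ Q *ᵥ x) := by
      rw [add_mulVec, smul_mulVec, smul_mulVec, dotProduct_add,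
        dotProduct_smul, dotProduct_smul]
      simp
    rw [e]
    have h1 := hP.dotProduct_mulVec_pos hx
    have h2 := hQ.dotProduct_mulVec_pos hx
    rcases eq_or_lt_of_le ht0 with h | h
    · rw [← h]; simpa using h2
    · have := mul_pos h h1
      have h2' : 0 ≤ (1 - t) * (star x ⬝ᵥ Q *ᵥ x) :=
        mul_nonneg (by linarith) h2.le
      linarith

lemma log_comb {μ t : ℝ} (hμ : 0 < μ) (ht0 : 0 ≤ t) (ht1 : t ≤ 1) :
    t * Real.log μ ≤ Real.log ((1 - t) + t * μ) := by
  have h : t • Real.log μ + (1 - t) • Real.log 1 ≤ Real.log (t • μ + (1 - t) • (1 : ℝ)) :=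
    strictConcaveOn_log_Ioi.concaveOn.2 (Set.mem_Ioi.mpr hμ)
      (Set.mem_Ioi.mpr one_pos) ht0 (by linarith) (by ring)
  simp only [smul_eq_mul, Real.log_one, mul_one, mul_zero, add_zero] at h
  calc t * Real.log μ ≤ Real.log (t * μ + (1 - t)) := h
    _ = Real.log ((1 - t) + t * μ) := by rw [add_comm]

lemma logdet_concave {P Q : Matrix n n ℝ} (hP : P.PosDef) (hQ : Q.PosDef)
    {t : ℝ} (ht0 : 0 ≤ t) (ht1 : t ≤ 1) :
    t * Real.log P.det + (1 - t) * Real.log Q.det ≤ Real.log (t • P + (1 - t) • Q).det := by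
  set R := CFC.sqrt Q with hRdef
  have hRh : R.IsHermitian := (Matrix.nonneg_iff_posSemidef.mp (CFC.sqrt_nonneg Q)).1
  have hRu : IsUnit R.det := sqrt_isUnit_det hQ
  have hRR : R * R = Q := CFC.sqrt_mul_sqrt_self Q (Matrix.nonneg_iff_posSemidef.mpr hQ.posSemidef)
  have hRinv : R * R⁻¹ = 1 := mul_nonsing_inv R hRu
  have hRinv' : R⁻¹ * R = 1 := nonsing_inv_mul R hRu
  have hRiu : IsUnit R⁻¹.det := isUnit_nonsing_inv_det R hRu
  set Z := R⁻¹ * P * R⁻¹ with hZdef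
  have hZpd : Z.PosDef := posDef_conj hP hRh.inv hRiu
  have hmid : R * Z * R = P := by
    rw [hZdef, ← Matrix.mul_assoc, ← Matrix.mul_assoc, hRinv, Matrix.one_mul,
      Matrix.mul_assoc, hRinv', Matrix.mul_one]
  have hcomb : t • P + (1 - t) • Q = R * ((1 - t) • 1 + t • Z) * R := by
    rw [Matrix.mul_add, Matrix.add_mul, Matrix.mul_smul, Matrix.smul_mul,
      Matrix.mul_smul, Matrix.smul_mul, Matrix.mul_one, hRR, hmid, add_comm]
  have hdet : (t • P + (1 - t) • Q).det = Q.det * ((1 - t) • 1 + t • Z).det := by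
    rw [hcomb, det_mul, det_mul, ← hRR, det_mul]
    ring
  have hZdet : Z.det = P.det / Q.det := by
    have h1 : Z.det = R⁻¹.det * P.det * R⁻¹.det := by rw [hZdef, det_mul, det_mul]
    have h2 : R⁻¹.det = (R.det)⁻¹ := by
      rw [det_nonsing_inv, Ring.inverse_eq_inv']
    have h3 : R.det * R.det = Q.det := by rw [← det_mul, hRR]
    have hRd : R.det ≠ 0 := hRu.ne_zero
    rw [h1, h2, ← h3]
    field_simp
  have hdet2 : ((1 - t) • 1 + t • Z).det = ∏ i, ((1 - t) + t * hZpd.1.eigenvalues i) :=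
    det_smul_one_add_smul hZpd.1 (1 - t) t
  have hfac : ∀ i, 0 < (1 - t) + t * hZpd.1.eigenvalues i := by
    intro i
    have hμ := hZpd.eigenvalues_pos i
    rcases eq_or_lt_of_le ht1 with h | h
    · subst h; simpa using hμ
    · have := mul_nonneg ht0 hμ.le
      linarith
  have hlog2 : Real.log ((1 - t) • 1 + t • Z).det
      = ∑ i, Real.log ((1 - t) + t * hZpd.1.eigenvalues i) := by
    rw [hdet2, Real.log_prod]
    exact fun i _ => (hfac i).ne'
  have hZdetlog : Real.log Z.det = Real.log P.det - Real.log Q.det := by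
    rw [hZdet, Real.log_div hP.det_pos.ne' hQ.det_pos.ne']
  have hZdetprod : Z.det = ∏ i, hZpd.1.eigenvalues i := by
    simpa using hZpd.1.det_eq_prod_eigenvalues
  have hsum : t * Real.log Z.det ≤ ∑ i, Real.log ((1 - t) + t * hZpd.1.eigenvalues i) := by
    have : Real.log Z.det = ∑ i, Real.log (hZpd.1.eigenvalues i) := by
      rw [hZdetprod, Real.log_prod]
      exact fun i _ => (hZpd.eigenvalues_pos i).ne'
    rw [this, Finset.mul_sum]
    exact Finset.sum_le_sum fun i _ => log_comb (hZpd.eigenvalues_pos i) ht0 ht1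
  have hdpos : 0 < ((1 - t) • 1 + t • Z).det := by
    rw [hdet2]; exact Finset.prod_pos fun i _ => hfac i
  rw [hdet, Real.log_mul hQ.det_pos.ne' hdpos.ne', hlog2]
  rw [hZdetlog] at hsum
  linarith

end helpers

section blocks
variable {m l : Type*} [Fintype m] [DecidableEq m] [Fintype l] [DecidableEq l]

noncomputable def schurC (M : Matrix (m ⊕ l) (m ⊕ l) ℝ) : Matrix l l ℝ :=
  M.toBlocks₂₂ - (M.toBlocks₁₂)ᴴ * (M.toBlocks₁₁)⁻¹ * M.toBlocks₁₂

lemma herm_fromBlocks {M : Matrix (m ⊕ l) (m ⊕ l) ℝ} (hM : M.IsHermitian) :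
    M = fromBlocks M.toBlocks₁₁ M.toBlocks₁₂ (M.toBlocks₁₂)ᴴ M.toBlocks₂₂ := by
  have h21 : M.toBlocks₂₁ = (M.toBlocks₁₂)ᴴ := by
    ext i j
    simp only [toBlocks₂₁, toBlocks₁₂, conjTranspose_apply, of_apply]
    conv_lhs => rw [← hM.eq]
    simp [conjTranspose_apply]
  conv_lhs => rw [← fromBlocks_toBlocks M, h21]

lemma posDef_toBlocks₁₁ {M : Matrix (m ⊕ l) (m ⊕ l) ℝ} (hM : M.PosDef) :
    M.toBlocks₁₁.PosDef := by
  refine Matrix.PosDef.of_dotProduct_mulVec_pos ?_ fun x hx => ?_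
  · ext i j
    simp only [toBlocks₁₁, conjTranspose_apply, of_apply]
    conv_lhs => rw [← hM.1.eq]
    simp [conjTranspose_apply]
  · have hz : (Sum.elim x (0 : l → ℝ)) ≠ 0 := by
      intro h
      apply hx
      funext i
      simpa using congrFun h (Sum.inl i)
    have := hM.dotProduct_mulVec_pos hz
    have e : star (Sum.elim x (0 : l → ℝ)) ⬝ᵥ M *ᵥ (Sum.elim x (0 : l → ℝ))
        = star x ⬝ᵥ M.toBlocks₁₁ *ᵥ x := by
      conv_lhs => rw [← fromBlocks_toBlocks M]
      rw [fromBlocks_mulVec, Function.star_sumElim, sumElim_dotProduct_sumElim]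
      simp
    rwa [e] at this

lemma schur_eq {M : Matrix (m ⊕ l) (m ⊕ l) ℝ} (hM : M.PosDef) (y : l → ℝ) :
    star y ⬝ᵥ (schurC M) *ᵥ y
      = star ((-((M.toBlocks₁₁⁻¹ * M.toBlocks₁₂) *ᵥ y)) ⊕ᵥ y) ⬝ᵥ
          M *ᵥ ((-((M.toBlocks₁₁⁻¹ * M.toBlocks₁₂) *ᵥ y)) ⊕ᵥ y) := by
  have hA := posDef_toBlocks₁₁ hM
  haveI := M.toBlocks₁₁.invertibleOfIsUnitDet (isUnit_iff_ne_zero.mpr hA.det_pos.ne')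
  rw [dotProduct_mulVec, dotProduct_mulVec]
  conv_rhs => rw [herm_fromBlocks hM.1]
  simp only [toBlocks_fromBlocks₁₁, toBlocks_fromBlocks₁₂]
  rw [schur_complement_eq₁₁ M.toBlocks₁₂ M.toBlocks₂₂ _ _ hA.1, neg_add_cancel]
  simp [schurC]

lemma schur_le {M : Matrix (m ⊕ l) (m ⊕ l) ℝ} (hM : M.PosDef) (x : m → ℝ) (y : l → ℝ) :
    star y ⬝ᵥ (schurC M) *ᵥ y ≤ star (x ⊕ᵥ y) ⬝ᵥ M *ᵥ (x ⊕ᵥ y) := by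
  have hA := posDef_toBlocks₁₁ hM
  haveI := M.toBlocks₁₁.invertibleOfIsUnitDet (isUnit_iff_ne_zero.mpr hA.det_pos.ne')
  rw [dotProduct_mulVec, dotProduct_mulVec]
  conv_rhs => rw [herm_fromBlocks hM.1]
  rw [schur_complement_eq₁₁ M.toBlocks₁₂ M.toBlocks₂₂ _ _ hA.1]
  have h1 : (0:ℝ) ≤ star (x + (M.toBlocks₁₁⁻¹ * M.toBlocks₁₂) *ᵥ y) ᵥ* M.toBlocks₁₁
      ⬝ᵥ (x + (M.toBlocks₁₁⁻¹ * M.toBlocks₁₂) *ᵥ y) := by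
    rw [← dotProduct_mulVec]
    exact hA.posSemidef.dotProduct_mulVec_nonneg _
  have h2 : star y ᵥ* (M.toBlocks₂₂ - (M.toBlocks₁₂)ᴴ * M.toBlocks₁₁⁻¹ * M.toBlocks₁₂) ⬝ᵥ y
      = star y ᵥ* (schurC M) ⬝ᵥ y := by rfl
  rw [h2]
  linarith

lemma schur_posDef {M : Matrix (m ⊕ l) (m ⊕ l) ℝ} (hM : M.PosDef) : (schurC M).PosDef := by
  have hA := posDef_toBlocks₁₁ hM
  haveI := M.toBlocks₁₁.invertibleOfIsUnitDet (isUnit_iff_ne_zero.mpr hA.det_pos.ne')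
  refine Matrix.PosDef.of_dotProduct_mulVec_pos ?_ fun y hy => ?_
  · have hherm : (fromBlocks M.toBlocks₁₁ M.toBlocks₁₂ (M.toBlocks₁₂)ᴴ M.toBlocks₂₂).IsHermitian := by
      rw [← herm_fromBlocks hM.1]; exact hM.1
    exact (IsHermitian.fromBlocks₁₁ _ _ hA.1).mp hherm
  · rw [schur_eq hM y]
    apply hM.dotProduct_mulVec_pos
    intro h
    apply hy
    funext i
    simpa using congrFun h (Sum.inr i)

lemma schur_det {M : Matrix (m ⊕ l) (m ⊕ l) ℝ} (hM : M.PosDef) :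
    M.det = M.toBlocks₁₁.det * (schurC M).det := by
  have hA := posDef_toBlocks₁₁ hM
  haveI := M.toBlocks₁₁.invertibleOfIsUnitDet (isUnit_iff_ne_zero.mpr hA.det_pos.ne')
  conv_lhs => rw [herm_fromBlocks hM.1]
  rw [det_fromBlocks₁₁]
  congr 2
  rw [invOf_eq_nonsing_inv]
  rfl

end blocks

/-- **Concavity of the conditional log-determinant.** For `(p+q) × (p+q)` real
symmetric positive definite matrices, with `M_A` the leading `p × p` principal
block, the map `M ↦ log det M − log det M_A` is concave. -/
theorem conditional_logdet_concave (p q : ℕ) (hp : 1 ≤ p) (hq : 1 ≤ q)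
    (V W : Matrix (Fin p ⊕ Fin q) (Fin p ⊕ Fin q) ℝ)
    (hVsymm : V.IsSymm) (hVpos : V.PosDef)
    (hWsymm : W.IsSymm) (hWpos : W.PosDef)
    (t : ℝ) (ht0 : 0 ≤ t) (ht1 : t ≤ 1) :
    Real.log ((t • V + (1 - t) • W).det)
        - Real.log (((t • V + (1 - t) • W).submatrix Sum.inl Sum.inl).det)
      ≥ t * (Real.log V.det - Real.log ((V.submatrix Sum.inl Sum.inl).det))
        + (1 - t) * (Real.log W.det - Real.log ((W.submatrix Sum.inl Sum.inl).det)) := by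
  set T := t • V + (1 - t) • W with hT
  have hTpos : T.PosDef := posDef_comb hVpos hWpos ht0 ht1
  have hSV := schur_posDef hVpos
  have hSW := schur_posDef hWpos
  have hST := schur_posDef hTpos
  have hsub : ∀ M : Matrix (Fin p ⊕ Fin q) (Fin p ⊕ Fin q) ℝ,
      M.submatrix Sum.inl Sum.inl = M.toBlocks₁₁ := fun M => rfl
  have hlog : ∀ M : Matrix (Fin p ⊕ Fin q) (Fin p ⊕ Fin q) ℝ, ∀ hM : M.PosDef,
      Real.log M.det - Real.log (M.toBlocks₁₁.det) = Real.log ((schurC M).det) := by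
    intro M hM
    rw [schur_det hM, Real.log_mul (posDef_toBlocks₁₁ hM).det_pos.ne'
      (schur_posDef hM).det_pos.ne']
    ring
  have hpsd : ((schurC T) - (t • schurC V + (1 - t) • schurC W)).PosSemidef := by
    refine Matrix.PosSemidef.of_dotProduct_mulVec_nonneg ?_ ?_
    · show _ᴴ = _
      rw [conjTranspose_sub, conjTranspose_add, conjTranspose_smul, conjTranspose_smul,
        hST.1.eq, hSV.1.eq, hSW.1.eq]
      simp
    · intro y
      set x := -((T.toBlocks₁₁⁻¹ * T.toBlocks₁₂) *ᵥ y) with hx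
      have hTx : star y ⬝ᵥ (schurC T) *ᵥ y
          = star (x ⊕ᵥ y) ⬝ᵥ T *ᵥ (x ⊕ᵥ y) := schur_eq hTpos y
      have hbil : star (x ⊕ᵥ y) ⬝ᵥ T *ᵥ (x ⊕ᵥ y)
          = t * (star (x ⊕ᵥ y) ⬝ᵥ V *ᵥ (x ⊕ᵥ y))
            + (1 - t) * (star (x ⊕ᵥ y) ⬝ᵥ W *ᵥ (x ⊕ᵥ y)) := by
        rw [hT, add_mulVec, smul_mulVec, smul_mulVec, dotProduct_add,
          dotProduct_smul, dotProduct_smul]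
        simp
      have hV5 := schur_le hVpos x y
      have hW5 := schur_le hWpos x y
      have e : star y ⬝ᵥ ((schurC T) - (t • schurC V + (1 - t) • schurC W)) *ᵥ y
          = star y ⬝ᵥ (schurC T) *ᵥ y - (t * (star y ⬝ᵥ (schurC V) *ᵥ y)
            + (1 - t) * (star y ⬝ᵥ (schurC W) *ᵥ y)) := by
        rw [sub_mulVec, add_mulVec, smul_mulVec, smul_mulVec, dotProduct_sub,
          dotProduct_add, dotProduct_smul, dotProduct_smul]
        simp
      rw [e, hTx, hbil]
      have h1 := mul_le_mul_of_nonneg_left hV5 ht0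
      have h2 := mul_le_mul_of_nonneg_left hW5 (by linarith : (0:ℝ) ≤ 1 - t)
      linarith
  have hK : (t • schurC V + (1 - t) • schurC W).PosDef := posDef_comb hSV hSW ht0 ht1
  have hdm : (t • schurC V + (1 - t) • schurC W).det ≤ (schurC T).det := det_mono hK hpsd
  have hlogmono : Real.log (t • schurC V + (1 - t) • schurC W).det
      ≤ Real.log (schurC T).det := Real.log_le_log hK.det_pos hdm
  have hconc := logdet_concave hSV hSW ht0 ht1
  have e1 := hlog V hVpos
  have e2 := hlog W hWpos
  have e3 := hlog T hTpos
  rw [hsub V, hsub W, hsub T, e1, e2, e3]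
  linarith
end

section
/- Araki–Lieb-type triangle inequality for log-determinant: Let n_A, n_B be positive integers, n = n_A + n_B, and let V be a 2n×2n real symmetric bona fide covariance matrix of a system of n modes partitioned into groups A and B of n_A and n_B modes. Then log det V ≥ |log det V_A − log det V_B|. -/
open Matrix
open scoped ComplexOrder

noncomputable section

set_option linter.unusedSectionVars false
set_option linter.unusedVariables false
set_option maxHeartbeats 1000000

variable {α : Type*} [Fintype α] [DecidableEq α]

lemma Jmat_skew (p q : α × Fin 2) : Jmat α q p = - Jmat α p q := by
  obtain ⟨a, i⟩ := p; obtain ⟨b, j⟩ := q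
  by_cases h : a = b
  · subst h; fin_cases i <;> fin_cases j <;> simp [Jmat, symp]
  · simp [Jmat, h, Ne.symm h]

lemma bonafide_quad {V : Matrix (α × Fin 2) (α × Fin 2) ℝ}
    (hbf : BonaFide V) (x y : α × Fin 2 → ℝ) :
    2 * (x ⬝ᵥ (Jmat α *ᵥ y)) ≤ x ⬝ᵥ (V *ᵥ x) + y ⬝ᵥ (V *ᵥ y) := by
  classical
  set z : α × Fin 2 → ℂ := fun i => (x i : ℂ) + Complex.I * y i with hz
  have h0 := hbf.dotProduct_mulVec_nonneg z
  rw [Complex.le_def] at h0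
  have h1 := h0.1
  simp only [Complex.zero_re] at h1
  -- expand the real part
  have e1 : (star z ⬝ᵥ ((V.map Complex.ofReal + Complex.I • (Jmat α).map Complex.ofReal) *ᵥ z)).re
      = ∑ i, ∑ j, (V i j * (x i * x j) + V i j * (y i * y j)
          - Jmat α i j * (x i * y j) + Jmat α i j * (y i * x j)) := by
    simp only [dotProduct, mulVec, Finset.mul_sum, Complex.re_sum]
    refine Finset.sum_congr rfl fun i _ => Finset.sum_congr rfl fun j _ => ?_
    simp only [hz, Pi.star_apply, Matrix.add_apply, Matrix.map_apply, Matrix.smul_apply,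
      smul_eq_mul, star_add, star_mul', Complex.star_def, Complex.conj_ofReal, Complex.conj_I,
      Complex.mul_re, Complex.mul_im, Complex.add_re, Complex.add_im, Complex.ofReal_re,
      Complex.ofReal_im, Complex.I_re, Complex.I_im, Complex.neg_re, Complex.neg_im]
    ring
  have e2 : ∑ i : α × Fin 2, ∑ j, Jmat α i j * (y i * x j)
      = - ∑ i : α × Fin 2, ∑ j, Jmat α i j * (x i * y j) := by
    have : ∑ i : α × Fin 2, ∑ j, Jmat α i j * (y i * x j)
        = ∑ j : α × Fin 2, ∑ i, Jmat α i j * (y i * x j) := Finset.sum_comm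
    rw [this, ← Finset.sum_neg_distrib]
    refine Finset.sum_congr rfl fun i _ => ?_
    rw [← Finset.sum_neg_distrib]
    refine Finset.sum_congr rfl fun j _ => ?_
    rw [Jmat_skew j i]; ring
  have e3 : x ⬝ᵥ (V *ᵥ x) = ∑ i, ∑ j, V i j * (x i * x j) := by
    simp only [dotProduct, mulVec, Finset.mul_sum]
    exact Finset.sum_congr rfl fun i _ => Finset.sum_congr rfl fun j _ => by ring
  have e4 : y ⬝ᵥ (V *ᵥ y) = ∑ i, ∑ j, V i j * (y i * y j) := by
    simp only [dotProduct, mulVec, Finset.mul_sum]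
    exact Finset.sum_congr rfl fun i _ => Finset.sum_congr rfl fun j _ => by ring
  have e5 : x ⬝ᵥ (Jmat α *ᵥ y) = ∑ i, ∑ j, Jmat α i j * (x i * y j) := by
    simp only [dotProduct, mulVec, Finset.mul_sum]
    exact Finset.sum_congr rfl fun i _ => Finset.sum_congr rfl fun j _ => by ring
  rw [e1] at h1
  simp only [Finset.sum_add_distrib, Finset.sum_sub_distrib] at h1
  rw [e2] at h1
  rw [e3, e4, e5]
  linarith

lemma Jmat_transpose : (Jmat α)ᵀ = - Jmat α := by
  ext p q
  rw [Matrix.transpose_apply, Matrix.neg_apply, Jmat_skew]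

lemma Jmat_mul_Jmat : Jmat α * Jmat α = -1 := by
  ext ⟨a, i⟩ ⟨b, j⟩
  have h1 : (Jmat α * Jmat α) (a, i) (b, j)
      = ∑ c : α, ∑ k : Fin 2, (if a = c then symp i k else 0) * (if c = b then symp k j else 0) := by
    rw [Matrix.mul_apply, Fintype.sum_prod_type]; rfl
  rw [h1]
  by_cases h : a = b
  · subst h
    simp only [ite_mul, zero_mul, Finset.sum_ite_eq, Finset.mem_univ, if_true]
    fin_cases i <;> fin_cases j <;>
      simp [symp, Fin.sum_univ_two, Matrix.one_apply, Prod.ext_iff]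
  · simp only [ite_mul, zero_mul, Finset.sum_ite_eq, Finset.mem_univ, if_true, h, if_false]
    simp [Matrix.one_apply, Prod.ext_iff, h]

lemma star_id (x : α × Fin 2 → ℝ) : star x = x := by
  funext i; simp

lemma bonafide_posDef {V : Matrix (α × Fin 2) (α × Fin 2) ℝ}
    (hsymm : V.IsSymm) (hbf : BonaFide V) : V.PosDef := by
  have hherm : V.IsHermitian := by
    rwa [Matrix.IsHermitian, Matrix.conjTranspose_eq_transpose_of_trivial]
  have hpsd : ∀ w : α × Fin 2 → ℝ, 0 ≤ w ⬝ᵥ (V *ᵥ w) := by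
    intro w
    have := bonafide_quad hbf w 0
    simpa using this
  refine Matrix.PosDef.of_dotProduct_mulVec_pos hherm fun x hx => ?_
  rw [star_id]
  rcases lt_or_eq_of_le (hpsd x) with h | h
  · exact h
  -- if x V x = 0, derive contradiction
  exfalso
  have key : ∀ w : α × Fin 2 → ℝ, x ⬝ᵥ (Jmat α *ᵥ w) = 0 := by
    intro w
    set c := w ⬝ᵥ (V *ᵥ w) with hc
    have hc0 : 0 ≤ c := hpsd w
    set s := x ⬝ᵥ (Jmat α *ᵥ w) with hs
    have hq := bonafide_quad hbf x ((s / (c + 1)) • w)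
    rw [Matrix.mulVec_smul, dotProduct_smul, Matrix.mulVec_smul,
      dotProduct_smul, smul_dotProduct] at hq
    simp only [smul_eq_mul, ← hs, ← hc, ← h] at hq
    -- hq : 2 * (s/(c+1) * s) ≤ x V x + s/(c+1) * (s/(c+1) * c)  with x V x = 0
    have hc1 : (0:ℝ) < c + 1 := by linarith
    rw [div_mul_eq_mul_div, div_mul_eq_mul_div] at hq
    field_simp at hq
    have h4 := hq
    have hss : s * s ≤ 0 := by nlinarith [mul_nonneg hc0 (sq_nonneg s)]
    have : s * s = 0 := le_antisymm hss (mul_self_nonneg s)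
    exact mul_self_eq_zero.mp this
  have h2 := key (Jmat α *ᵥ x)
  rw [Matrix.mulVec_mulVec, Jmat_mul_Jmat] at h2
  simp only [Matrix.neg_mulVec, Matrix.one_mulVec, dotProduct_neg] at h2
  have : x ⬝ᵥ x = 0 := by linarith
  exact hx (by
    funext i
    have := dotProduct_self_eq_zero.mp this
    exact congrFun this i)

lemma bonafide_key_psd {V : Matrix (α × Fin 2) (α × Fin 2) ℝ}
    (hsymm : V.IsSymm) (hbf : BonaFide V) :
    (V - (Jmat α)ᵀ * V⁻¹ * Jmat α).PosSemidef := by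
  have hpd := bonafide_posDef hsymm hbf
  have hinv : IsUnit V.det := hpd.det_pos.ne'.isUnit
  have hVVinv : V * V⁻¹ = 1 := Matrix.mul_nonsing_inv V hinv
  have hsub : ((Jmat α)ᵀ * V⁻¹ * Jmat α).PosSemidef := by
    have := (hpd.inv.posSemidef).conjTranspose_mul_mul_same (Jmat α)
    simpa [Matrix.conjTranspose_eq_transpose_of_trivial] using this
  refine Matrix.PosSemidef.of_dotProduct_mulVec_nonneg ?_ ?_
  · exact hpd.isHermitian.sub hsub.isHermitian
  intro x
  rw [star_id]
  have hq := bonafide_quad hbf x (-(V⁻¹ *ᵥ (Jmat α *ᵥ x)))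
  set u := Jmat α *ᵥ x with hu
  set w := V⁻¹ *ᵥ u with hw
  have hVw : V *ᵥ w = u := by
    rw [hw, Matrix.mulVec_mulVec, hVVinv, Matrix.one_mulVec]
  have e1 : (-w) ⬝ᵥ (V *ᵥ (-w)) = w ⬝ᵥ u := by
    rw [Matrix.mulVec_neg, dotProduct_neg, neg_dotProduct, neg_neg, hVw]
  have hxJ : x ᵥ* Jmat α = -u := by
    rw [← Matrix.transpose_transpose (Jmat α), Matrix.vecMul_transpose, Jmat_transpose,
      Matrix.neg_mulVec, hu]
  have e2 : x ⬝ᵥ (Jmat α *ᵥ (-w)) = w ⬝ᵥ u := by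
    rw [Matrix.mulVec_neg, dotProduct_neg, Matrix.dotProduct_mulVec, hxJ,
      neg_dotProduct, neg_neg, dotProduct_comm]
  have e3 : x ⬝ᵥ (((Jmat α)ᵀ * V⁻¹ * Jmat α) *ᵥ x) = w ⬝ᵥ u := by
    rw [← Matrix.mulVec_mulVec, ← Matrix.mulVec_mulVec, ← hu, ← hw,
      Matrix.dotProduct_mulVec x, Matrix.vecMul_transpose, ← hu, dotProduct_comm]
  rw [e1, e2] at hq
  rw [Matrix.sub_mulVec, dotProduct_sub, e3]
  linarith

lemma star_id' {n : Type*} (x : n → ℝ) : star x = x := by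
  funext i; simp

lemma one_le_det_one_add {n : Type*} [Fintype n] [DecidableEq n] {Z : Matrix n n ℝ}
    (hZ : Z.PosSemidef) : 1 ≤ (1 + Z).det := by
  have hM : (1 + Z).PosSemidef := Matrix.PosSemidef.add Matrix.PosSemidef.one hZ
  have hherm := hM.1
  have hdet : (1 + Z).det = ∏ i, hherm.eigenvalues i := by
    simpa using hherm.det_eq_prod_eigenvalues
  have key : ∀ i, 1 ≤ hherm.eigenvalues i := by
    intro i
    set v : n → ℝ := ⇑(hherm.eigenvectorBasis i) with hv
    have hmu : (1 + Z) *ᵥ v = hherm.eigenvalues i • v := hherm.mulVec_eigenvectorBasis i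
    have hvne : v ≠ 0 := by
      intro h
      refine hherm.eigenvectorBasis.orthonormal.ne_zero i ?_
      ext1 j
      exact congrFun h j
    have hc0 : 0 < v ⬝ᵥ v := by
      rcases lt_or_eq_of_le (Finset.sum_nonneg fun j _ => mul_self_nonneg (v j)) with h | h
      · exact h
      · exact absurd (dotProduct_self_eq_zero.mp h.symm) hvne
    have hZv : 0 ≤ v ⬝ᵥ (Z *ᵥ v) := by
      have := hZ.dotProduct_mulVec_nonneg v
      rwa [star_id'] at this
    have hexp : v ⬝ᵥ ((1 + Z) *ᵥ v) = v ⬝ᵥ v + v ⬝ᵥ (Z *ᵥ v) := by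
      rw [Matrix.add_mulVec, Matrix.one_mulVec, dotProduct_add]
    have hexp2 : v ⬝ᵥ ((1 + Z) *ᵥ v) = hherm.eigenvalues i * (v ⬝ᵥ v) := by
      rw [hmu, dotProduct_smul, smul_eq_mul]
    nlinarith [hexp, hexp2, hZv, hc0]
  rw [hdet]
  calc (1:ℝ) = ∏ _i : n, 1 := by simp
    _ ≤ ∏ i, hherm.eigenvalues i :=
        Finset.prod_le_prod (fun _ _ => zero_le_one) (fun i _ => key i)

open scoped MatrixOrder in
lemma det_mono_s7 {n : Type*} [Fintype n] [DecidableEq n] {X Y : Matrix n n ℝ}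
    (hY : Y.PosDef) (hXY : (X - Y).PosSemidef) : Y.det ≤ X.det := by
  set S := CFC.sqrt Y with hSdef
  have hS : S * S = Y := CFC.sqrt_mul_sqrt_self Y hY.posSemidef.nonneg
  have hdetS : S.det * S.det = Y.det := by rw [← Matrix.det_mul, hS]
  have hSu : IsUnit S.det := by
    rcases eq_or_ne S.det 0 with h | h
    · exfalso; rw [h, mul_zero] at hdetS; exact hY.det_pos.ne' hdetS.symm
    · exact h.isUnit
  have hsymmS : S.IsHermitian := (CFC.sqrt_nonneg Y).posSemidef.1
  have hinvH : (S⁻¹)ᴴ = S⁻¹ := hsymmS.inv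
  have hZpsd : (S⁻¹ * (X - Y) * S⁻¹).PosSemidef := by
    have := hXY.mul_mul_conjTranspose_same S⁻¹
    rwa [hinvH] at this
  have hX : X = S * (1 + S⁻¹ * (X - Y) * S⁻¹) * S := by
    have e : S * (1 + S⁻¹ * (X - Y) * S⁻¹) * S
        = S * S + S * S⁻¹ * (X - Y) * (S⁻¹ * S) := by noncomm_ring
    rw [e, hS, Matrix.mul_nonsing_inv _ hSu, Matrix.nonsing_inv_mul _ hSu,
      Matrix.one_mul, Matrix.mul_one]
    abel
  calc Y.det = Y.det * 1 := (mul_one _).symm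
    _ ≤ Y.det * (1 + S⁻¹ * (X - Y) * S⁻¹).det := by
        have := one_le_det_one_add hZpsd
        have hy := hY.det_pos
        nlinarith
    _ = X.det := by
        have hdX : X.det = S.det * (1 + S⁻¹ * (X - Y) * S⁻¹).det * S.det := by
          conv_lhs => rw [hX]
          rw [Matrix.det_mul, Matrix.det_mul]
        rw [hdX, ← hdetS]; ring

lemma posDef_of_psd_isUnit {n : Type*} [Fintype n] [DecidableEq n] {M : Matrix n n ℝ}
    (h : M.PosSemidef) (hdet : IsUnit M) : M.PosDef := by
  refine Matrix.PosDef.of_dotProduct_mulVec_pos h.1 fun x hx => lt_of_le_of_ne (h.dotProduct_mulVec_nonneg x) fun heq => hx ?_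
  have hMx : M *ᵥ x = 0 := (h.dotProduct_mulVec_zero_iff x).mp heq.symm
  have hinj := Matrix.mulVec_injective_iff_isUnit.mpr hdet
  have := hinj (a₁ := x) (a₂ := 0) (by simpa using hMx)
  exact this

variable {β : Type*} [Fintype β] [DecidableEq β]

lemma Jmat_det_sq : Matrix.det (Jmat α) * Matrix.det (Jmat α) = 1 := by
  have h := congrArg Matrix.det (Jmat_mul_Jmat (α := α))
  rw [Matrix.det_mul] at h
  rw [h]
  have : (-1 : Matrix (α × Fin 2) (α × Fin 2) ℝ) = -(1 : Matrix _ _ ℝ) := by simp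
  rw [this, Matrix.det_neg, Matrix.det_one, Fintype.card_prod, Fintype.card_fin]
  rw [pow_mul']
  norm_num

lemma Jmat_pd_conj {S : Matrix (α × Fin 2) (α × Fin 2) ℝ} (hS : S.PosDef) :
    ((Jmat α)ᵀ * S * Jmat α).PosDef := by
  have hherm : ((Jmat α)ᵀ * S * Jmat α).IsHermitian := by
    have := hS.posSemidef.conjTranspose_mul_mul_same (Jmat α)
    rw [Matrix.conjTranspose_eq_transpose_of_trivial] at this
    exact this.1
  refine Matrix.PosDef.of_dotProduct_mulVec_pos hherm fun x hx => ?_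
  rw [star_id']
  have hJx : Jmat α *ᵥ x ≠ 0 := by
    intro h
    apply hx
    have : Jmat α *ᵥ (Jmat α *ᵥ x) = 0 := by rw [h, Matrix.mulVec_zero]
    rw [Matrix.mulVec_mulVec, Jmat_mul_Jmat, Matrix.neg_mulVec, Matrix.one_mulVec] at this
    simpa [neg_eq_zero] using this
  have := hS.dotProduct_mulVec_pos hJx
  rw [star_id'] at this
  rw [← Matrix.mulVec_mulVec, ← Matrix.mulVec_mulVec, Matrix.dotProduct_mulVec x,
    Matrix.vecMul_transpose]
  exact this

lemma key_det (V : Matrix ((α ⊕ β) × Fin 2) ((α ⊕ β) × Fin 2) ℝ)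
    (hsymm : V.IsSymm) (hbf : BonaFide V) :
    0 < (V.submatrix (fun p : α × Fin 2 => (Sum.inl p.1, p.2))
        (fun p : α × Fin 2 => (Sum.inl p.1, p.2))).det ∧
    (V.submatrix (fun p : β × Fin 2 => (Sum.inr p.1, p.2))
        (fun p : β × Fin 2 => (Sum.inr p.1, p.2))).det
      ≤ V.det * (V.submatrix (fun p : α × Fin 2 => (Sum.inl p.1, p.2))
        (fun p : α × Fin 2 => (Sum.inl p.1, p.2))).det := by
  classical
  set e : (α × Fin 2 ⊕ β × Fin 2) ≃ (α ⊕ β) × Fin 2 := (Equiv.sumProdDistrib α β (Fin 2)).symm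
    with he
  have he1 : ∀ p : α × Fin 2, e (Sum.inl p) = (Sum.inl p.1, p.2) := fun p => rfl
  have he2 : ∀ p : β × Fin 2, e (Sum.inr p) = (Sum.inr p.1, p.2) := fun p => rfl
  set W := V.submatrix e e with hW
  set A := W.toBlocks₁₁ with hA
  set B := W.toBlocks₁₂ with hB
  set D := W.toBlocks₂₂ with hD
  -- identify the blocks
  have hAeq : A = V.submatrix (fun p : α × Fin 2 => (Sum.inl p.1, p.2))
      (fun p : α × Fin 2 => (Sum.inl p.1, p.2)) := by
    ext p q; rfl
  have hDeq : D = V.submatrix (fun p : β × Fin 2 => (Sum.inr p.1, p.2))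
      (fun p : β × Fin 2 => (Sum.inr p.1, p.2)) := by
    ext p q; rfl
  have hVpd := bonafide_posDef hsymm hbf
  have hWsymm : W.IsSymm := by
    rw [hW, Matrix.IsSymm, Matrix.transpose_submatrix, hsymm.eq]
  have hWpd : W.PosDef := by
    refine Matrix.PosDef.of_dotProduct_mulVec_pos (by rwa [Matrix.IsHermitian, Matrix.conjTranspose_eq_transpose_of_trivial]) ?_
    intro x hx
    rw [star_id', hW, Matrix.submatrix_mulVec_equiv]
    have hxe : (x ∘ e.symm) ≠ 0 := by
      intro h; apply hx; funext i
      have := congrFun h (e i)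
      simpa using this
    have := hVpd.dotProduct_mulVec_pos hxe
    rw [star_id'] at this
    convert this using 1
    simp only [dotProduct, Function.comp_apply]
    exact Fintype.sum_equiv e _ _ fun i => by simp
  -- identify C block with Bᴴ
  have hWs : Wᵀ = W := hWsymm
  have hCB : W.toBlocks₂₁ = Bᴴ := by
    rw [Matrix.conjTranspose_eq_transpose_of_trivial]
    ext p q
    exact congrFun (congrFun hWs (Sum.inl q)) (Sum.inr p)
  have hWfb : Matrix.fromBlocks A B Bᴴ D = W := by
    rw [← hCB, hA, hB, hD, Matrix.fromBlocks_toBlocks]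
  have hDpd : D.PosDef := by
    refine Matrix.PosDef.of_dotProduct_mulVec_pos ?_ ?_
    · rw [Matrix.IsHermitian, Matrix.conjTranspose_eq_transpose_of_trivial]
      ext p q
      exact (congrFun (congrFun hWs (Sum.inr q)) (Sum.inr p)).symm
    · intro x hx
      have hy : (Sum.elim 0 x : (α × Fin 2 ⊕ β × Fin 2) → ℝ) ≠ 0 := by
        intro h; apply hx; funext i; exact congrFun h (Sum.inr i)
      have hq := hWpd.dotProduct_mulVec_pos hy
      rw [star_id', ← hWfb, Matrix.fromBlocks_mulVec, sumElim_dotProduct_sumElim] at hq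
      simp only [Sum.elim_comp_inl, Sum.elim_comp_inr, Matrix.mulVec_zero, zero_add,
        zero_dotProduct] at hq
      rw [star_id']
      exact hq
  have hApd : A.PosDef := by
    refine Matrix.PosDef.of_dotProduct_mulVec_pos ?_ ?_
    · rw [Matrix.IsHermitian, Matrix.conjTranspose_eq_transpose_of_trivial]
      ext p q
      exact (congrFun (congrFun hWs (Sum.inl q)) (Sum.inl p)).symm
    · intro x hx
      have hy : (Sum.elim x 0 : (α × Fin 2 ⊕ β × Fin 2) → ℝ) ≠ 0 := by
        intro h; apply hx; funext i; exact congrFun h (Sum.inl i)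
      have hq := hWpd.dotProduct_mulVec_pos hy
      rw [star_id', ← hWfb, Matrix.fromBlocks_mulVec, sumElim_dotProduct_sumElim] at hq
      simp only [Sum.elim_comp_inl, Sum.elim_comp_inr, Matrix.mulVec_zero, add_zero,
        zero_dotProduct] at hq
      rw [star_id']
      exact hq
  haveI : Invertible D := hDpd.isUnit.invertible
  haveI : Invertible W := hWpd.isUnit.invertible
  haveI hWfbInv : Invertible (Matrix.fromBlocks A B Bᴴ D) := by
    rw [hWfb]; exact hWpd.isUnit.invertible
  haveI hSinv' : Invertible (A - B * ⅟D * Bᴴ) :=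
    Matrix.invertibleOfFromBlocks₂₂Invertible A B Bᴴ D
  have hinvD : (⅟D : Matrix (β × Fin 2) (β × Fin 2) ℝ) = D⁻¹ := invOf_eq_nonsing_inv D
  set S := A - B * D⁻¹ * Bᴴ with hSdef
  have hSS : A - B * ⅟D * Bᴴ = S := by rw [hinvD]
  haveI : Invertible S := hSS ▸ hSinv'
  have hSpsd : S.PosSemidef := by
    refine (Matrix.PosDef.fromBlocks₂₂ A B hDpd).mp ?_
    rw [hWfb]; exact hWpd.posSemidef
  have hSpd : S.PosDef := posDef_of_psd_isUnit hSpsd (isUnit_of_invertible S)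
  have hdetW : W.det = D.det * S.det := by
    rw [← hWfb, Matrix.det_fromBlocks₂₂, hSS]
  have hWinv11 : W⁻¹.toBlocks₁₁ = S⁻¹ := by
    have h1 : (Matrix.fromBlocks A B Bᴴ D)⁻¹.toBlocks₁₁ = ⅟(A - B * ⅟D * Bᴴ) := by
      rw [← invOf_eq_nonsing_inv, Matrix.invOf_fromBlocks₂₂_eq, Matrix.toBlocks_fromBlocks₁₁]
    rw [hWfb] at h1
    rw [h1, invOf_eq_nonsing_inv, hSS]
  -- the symplectic form in block coordinates
  set JW := (Jmat (α ⊕ β)).submatrix e e with hJW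
  have hJWblocks : JW = Matrix.fromBlocks (Jmat α) 0 0 (Jmat β) := by
    ext p q
    rcases p with p | p <;> rcases q with q | q <;>
      simp [hJW, Matrix.submatrix_apply, he1, he2, Jmat]
  -- positive semidefiniteness of the Schur-type difference, restricted to the A block
  have h0 := bonafide_key_psd hsymm hbf
  have h1 : (V - (Jmat (α ⊕ β))ᵀ * V⁻¹ * Jmat (α ⊕ β)).submatrix e e
      = W - JWᵀ * W⁻¹ * JW := by
    have hsub : (V - (Jmat (α ⊕ β))ᵀ * V⁻¹ * Jmat (α ⊕ β)).submatrix e e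
        = V.submatrix e e - ((Jmat (α ⊕ β))ᵀ * V⁻¹ * Jmat (α ⊕ β)).submatrix e e := by
      rw [Matrix.submatrix_sub]; rfl
    rw [hsub, ← Matrix.submatrix_mul_equiv _ _ _ e _, ← Matrix.submatrix_mul_equiv _ _ _ e _,
      ← Matrix.transpose_submatrix, Matrix.inv_submatrix_equiv]
  have hPSD : (W - JWᵀ * W⁻¹ * JW).PosSemidef := by
    rw [← h1]; exact h0.submatrix e
  have hP11 : ((W - JWᵀ * W⁻¹ * JW).toBlocks₁₁).PosSemidef := by
    exact hPSD.submatrix (Sum.inl : α × Fin 2 → (α × Fin 2) ⊕ (β × Fin 2))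
  -- compute the A-block of the difference
  have hblock : (W - JWᵀ * W⁻¹ * JW).toBlocks₁₁ = A - (Jmat α)ᵀ * S⁻¹ * Jmat α := by
    have hWinv : W⁻¹ = Matrix.fromBlocks (W⁻¹.toBlocks₁₁) (W⁻¹.toBlocks₁₂)
        (W⁻¹.toBlocks₂₁) (W⁻¹.toBlocks₂₂) := (Matrix.fromBlocks_toBlocks _).symm
    rw [hJWblocks, Matrix.fromBlocks_transpose, Matrix.transpose_zero, Matrix.transpose_zero]
    rw [hWinv, Matrix.fromBlocks_multiply, Matrix.fromBlocks_multiply, hWinv11]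
    ext p q
    simp [Matrix.toBlocks₁₁, Matrix.sub_apply, Matrix.mul_zero, Matrix.zero_mul,
      add_zero, zero_add, hA]
  -- determinant comparison
  have hYpd : ((Jmat α)ᵀ * S⁻¹ * Jmat α).PosDef := Jmat_pd_conj hSpd.inv
  have hAY : (A - (Jmat α)ᵀ * S⁻¹ * Jmat α).PosSemidef := by rw [← hblock]; exact hP11
  have hdetle : ((Jmat α)ᵀ * S⁻¹ * Jmat α).det ≤ A.det := det_mono_s7 hYpd hAY
  have hdetY : ((Jmat α)ᵀ * S⁻¹ * Jmat α).det = S⁻¹.det := by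
    rw [Matrix.det_mul, Matrix.det_mul, Matrix.det_transpose]
    linear_combination (S⁻¹.det) * Jmat_det_sq (α := α)
  have hdetSinv : S⁻¹.det = S.det⁻¹ := by
    simp [Matrix.det_nonsing_inv, Ring.inverse_eq_inv']
  have hS0 : 0 < S.det := hSpd.det_pos
  have hD0 : 0 < D.det := hDpd.det_pos
  have hA1 : S.det⁻¹ ≤ A.det := by rw [← hdetSinv, ← hdetY]; exact hdetle
  have hdetV : V.det = W.det := (Matrix.det_submatrix_equiv_self e V).symm
  rw [← hDeq, ← hAeq, hdetV, hdetW]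
  refine ⟨hApd.det_pos, ?_⟩
  calc D.det = (D.det * S.det) * S.det⁻¹ := by field_simp
    _ ≤ (D.det * S.det) * A.det := mul_le_mul_of_nonneg_left hA1 (by positivity)


/-- **Araki–Lieb-type triangle inequality for the log-determinant.** For any
bona fide covariance matrix of a system of `nA + nB` modes,
`log det V ≥ |log det V_A − log det V_B|`. -/
theorem logdet_triangle_inequality (nA nB : ℕ) (hA : 0 < nA) (hB : 0 < nB)
    (V : Matrix ((Fin nA ⊕ Fin nB) × Fin 2) ((Fin nA ⊕ Fin nB) × Fin 2) ℝ)
    (hsymm : V.IsSymm) (hbf : BonaFide V) :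
    Real.log V.det ≥
      |Real.log ((V.submatrix
            (fun p : Fin nA × Fin 2 => (Sum.inl p.1, p.2))
            (fun p : Fin nA × Fin 2 => (Sum.inl p.1, p.2))).det)
        - Real.log ((V.submatrix
            (fun p : Fin nB × Fin 2 => (Sum.inr p.1, p.2))
            (fun p : Fin nB × Fin 2 => (Sum.inr p.1, p.2))).det)| := by
  classical
  obtain ⟨hdA0, hkey1⟩ := key_det V hsymm hbf
  -- swapped version
  set h : (Fin nB ⊕ Fin nA) × Fin 2 ≃ (Fin nA ⊕ Fin nB) × Fin 2 :=
    (Equiv.sumComm (Fin nB) (Fin nA)).prodCongr (Equiv.refl (Fin 2)) with hh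
  set V' := V.submatrix h h with hV'
  have hsymm' : V'.IsSymm := by
    rw [hV', Matrix.IsSymm, Matrix.transpose_submatrix, hsymm.eq]
  have hJswap : Jmat (Fin nB ⊕ Fin nA) = (Jmat (Fin nA ⊕ Fin nB)).submatrix h h := by
    ext p q
    simp only [Jmat, Matrix.submatrix_apply, hh, Equiv.prodCongr_apply, Prod.map_fst,
      Prod.map_snd, Equiv.refl_apply, EmbeddingLike.apply_eq_iff_eq]
  have hbf' : BonaFide V' := by
    rw [BonaFide, hJswap]
    have : V'.map Complex.ofReal + Complex.I • ((Jmat (Fin nA ⊕ Fin nB)).submatrix h h).map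
        Complex.ofReal = ((V.map Complex.ofReal) + Complex.I •
          ((Jmat (Fin nA ⊕ Fin nB)).map Complex.ofReal)).submatrix h h := by
      ext p q
      simp [Matrix.submatrix_apply, Matrix.map_apply, Matrix.add_apply, Matrix.smul_apply, hV']
    rw [this]
    exact hbf.submatrix h
  obtain ⟨hdB0', hkey2⟩ := key_det V' hsymm' hbf'
  have hsub1 : V'.submatrix (fun p : Fin nB × Fin 2 => (Sum.inl p.1, p.2))
      (fun p : Fin nB × Fin 2 => (Sum.inl p.1, p.2))
      = V.submatrix (fun p : Fin nB × Fin 2 => (Sum.inr p.1, p.2))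
        (fun p : Fin nB × Fin 2 => (Sum.inr p.1, p.2)) := by
    ext p q; rfl
  have hsub2 : V'.submatrix (fun p : Fin nA × Fin 2 => (Sum.inr p.1, p.2))
      (fun p : Fin nA × Fin 2 => (Sum.inr p.1, p.2))
      = V.submatrix (fun p : Fin nA × Fin 2 => (Sum.inl p.1, p.2))
        (fun p : Fin nA × Fin 2 => (Sum.inl p.1, p.2)) := by
    ext p q; rfl
  have hdetV' : V'.det = V.det := Matrix.det_submatrix_equiv_self h V
  rw [hsub1] at hdB0'
  rw [hsub1, hsub2, hdetV'] at hkey2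
  set dA := (V.submatrix (fun p : Fin nA × Fin 2 => (Sum.inl p.1, p.2))
      (fun p : Fin nA × Fin 2 => (Sum.inl p.1, p.2))).det with hdA
  set dB := (V.submatrix (fun p : Fin nB × Fin 2 => (Sum.inr p.1, p.2))
      (fun p : Fin nB × Fin 2 => (Sum.inr p.1, p.2))).det with hdB
  have hdV0 : 0 < V.det := (bonafide_posDef hsymm hbf).det_pos
  rw [ge_iff_le, abs_sub_le_iff]
  constructor
  · have : dA ≤ V.det * dB := hkey2
    have hlog := Real.log_le_log hdA0 this
    rw [Real.log_mul hdV0.ne' hdB0'.ne'] at hlog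
    linarith
  · have : dB ≤ V.det * dA := hkey1
    have hlog := Real.log_le_log hdB0' this
    rw [Real.log_mul hdV0.ne' hdA0.ne'] at hlog
    linarith

end
end

section
/- Equal complementary marginal determinants of pure Gaussian covariance matrices: Let n be a positive integer, let S be a 2n×2n real symplectic matrix (S J_n Sᵀ = J_n), and set V = S Sᵀ. Then for any subset X of the n modes, det V_X = det V_{Xᶜ}, where Xᶜ is the complementary set of modes. In particular det V = 1. -/
open Matrix

noncomputable section

lemma symp_mul_transpose : symp * sympᵀ = 1 := by
  ext i j
  fin_cases i <;> fin_cases j <;>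
    simp [symp, Matrix.mul_apply, Fin.sum_univ_two, Matrix.one_apply,
      Matrix.transpose_apply, Matrix.vecHead, Matrix.vecTail]

lemma det_symp : symp.det = 1 := by simp [symp, Matrix.det_fin_two_of]

lemma Jmat_eq (α : Type*) [DecidableEq α] [Fintype α] :
    Jmat α = (blockDiagonal (fun _ : α => symp)).submatrix
      (Equiv.prodComm α (Fin 2)) (Equiv.prodComm α (Fin 2)) := by
  ext ⟨i, a⟩ ⟨j, b⟩
  simp [Jmat, Matrix.blockDiagonal_apply, eq_comm]

lemma det_Jmat (α : Type*) [DecidableEq α] [Fintype α] : (Jmat α).det = 1 := by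
  rw [Jmat_eq, Matrix.det_submatrix_equiv_self, Matrix.det_blockDiagonal]
  simp [det_symp]

lemma Jmat_mul_transpose (α : Type*) [DecidableEq α] [Fintype α] :
    Jmat α * (Jmat α)ᵀ = 1 := by
  rw [Jmat_eq, transpose_submatrix,
    Matrix.submatrix_mul_equiv _ _ _ (Equiv.prodComm α (Fin 2)) _,
    Matrix.blockDiagonal_transpose, ← Matrix.blockDiagonal_mul]
  simp only [symp_mul_transpose]
  rw [show (fun _ : α => (1 : Matrix (Fin 2) (Fin 2) ℝ)) = 1 from rfl,
    Matrix.blockDiagonal_one]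
  simpa using Matrix.submatrix_one_equiv (α := ℝ) (Equiv.prodComm α (Fin 2))

lemma Jmat_conj_submatrix {α β : Type*} [DecidableEq α] [Fintype α] [DecidableEq β] [Fintype β]
    (u : β → α) (W : Matrix (α × Fin 2) (α × Fin 2) ℝ) :
    (Jmat α * W * (Jmat α)ᵀ).submatrix (fun p : β × Fin 2 => (u p.1, p.2))
      (fun p : β × Fin 2 => (u p.1, p.2))
    = Jmat β * W.submatrix (fun p : β × Fin 2 => (u p.1, p.2))
        (fun p : β × Fin 2 => (u p.1, p.2)) * (Jmat β)ᵀ := by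
  ext ⟨i, a⟩ ⟨j, b⟩
  simp [Matrix.mul_apply, Jmat, Fintype.sum_prod_type, ite_mul, mul_ite, zero_mul, mul_zero,
    Finset.sum_ite_eq, Finset.sum_ite_eq']

/-- **Equal complementary marginal determinants of pure Gaussian covariance
matrices.** If `S` is symplectic (`S Jₙ Sᵀ = Jₙ`) and `V = S Sᵀ`, then for every
subset `X` of the `n` modes, `det V_X = det V_{Xᶜ}`; in particular `det V = 1`. -/
theorem pure_gaussian_complementary_marginals (n : ℕ) (hn : 0 < n)
    (S : Matrix (Fin n × Fin 2) (Fin n × Fin 2) ℝ)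
    (hS : S * Jmat (Fin n) * Sᵀ = Jmat (Fin n)) :
    (∀ X : Finset (Fin n),
      ((S * Sᵀ).submatrix
          (fun p : {x // x ∈ X} × Fin 2 => ((p.1 : Fin n), p.2))
          (fun p : {x // x ∈ X} × Fin 2 => ((p.1 : Fin n), p.2))).det
        = ((S * Sᵀ).submatrix
          (fun p : {x // x ∈ Xᶜ} × Fin 2 => ((p.1 : Fin n), p.2))
          (fun p : {x // x ∈ Xᶜ} × Fin 2 => ((p.1 : Fin n), p.2))).det)
    ∧ (S * Sᵀ).det = 1 := by
  set J := Jmat (Fin n) with hJdef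
  have hdetJ : J.det = 1 := det_Jmat _
  have hJJt : J * Jᵀ = 1 := Jmat_mul_transpose _
  have hJtJ : Jᵀ * J = 1 := mul_eq_one_comm.mp hJJt
  -- determinant of V
  have hdS : S.det * S.det = 1 := by
    have h := congrArg Matrix.det hS
    rw [Matrix.det_mul, Matrix.det_mul, Matrix.det_transpose, hdetJ, mul_one] at h
    simpa using h
  have hdetV : (S * Sᵀ).det = 1 := by
    rw [Matrix.det_mul, Matrix.det_transpose, hdS]
  -- transpose of S is symplectic: Sᵀ * J * S = J
  have hrq : S * (J * Sᵀ * Jᵀ) = 1 := by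
    rw [← Matrix.mul_assoc, ← Matrix.mul_assoc, hS, hJJt]
  have hlq : J * Sᵀ * Jᵀ * S = 1 := by
    have := mul_eq_one_comm.mp hrq
    simpa [Matrix.mul_assoc] using this
  have h2 : Sᵀ * Jᵀ * S = Jᵀ := by
    have h := congrArg (fun M => Jᵀ * M) hlq
    simp only [Matrix.mul_one] at h
    calc Sᵀ * Jᵀ * S = (Jᵀ * J) * (Sᵀ * Jᵀ * S) := by rw [hJtJ, Matrix.one_mul]
      _ = Jᵀ * (J * Sᵀ * Jᵀ * S) := by simp only [Matrix.mul_assoc]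
      _ = Jᵀ := by rw [hlq, Matrix.mul_one]
  have hT : Sᵀ * J * S = J := by
    have h := congrArg Matrix.transpose h2
    simpa [Matrix.transpose_mul, Matrix.mul_assoc] using h
  -- V * (J V Jᵀ) = 1
  have hVinv : (S * Sᵀ) * (J * (S * Sᵀ) * Jᵀ) = 1 := by
    have hre : (S * Sᵀ) * (J * (S * Sᵀ) * Jᵀ) = S * (Sᵀ * J * S) * Sᵀ * Jᵀ := by
      simp only [Matrix.mul_assoc]
    rw [hre, hT, hS, hJJt]
  constructor
  · intro X
    set V : Matrix (Fin n × Fin 2) (Fin n × Fin 2) ℝ := S * Sᵀ with hVdef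
    -- the reindexing equivalence
    let e0 : {x // x ∈ X} ⊕ {x // x ∈ Xᶜ} ≃ Fin n :=
      (Equiv.sumCongr (Equiv.refl _)
        (Equiv.subtypeEquivRight fun x => Finset.mem_compl)).trans
        (Equiv.sumCompl (· ∈ X))
    let e : ({x // x ∈ X} × Fin 2) ⊕ ({x // x ∈ Xᶜ} × Fin 2) ≃ Fin n × Fin 2 :=
      (Equiv.sumProdDistrib _ _ (Fin 2)).symm.trans (e0.prodCongr (Equiv.refl (Fin 2)))
    have he₁ : ∀ p : {x // x ∈ X} × Fin 2, e (Sum.inl p) = ((p.1 : Fin n), p.2) :=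
      fun p => rfl
    have he₂ : ∀ p : {x // x ∈ Xᶜ} × Fin 2, e (Sum.inr p) = ((p.1 : Fin n), p.2) :=
      fun p => rfl
    set M := V.submatrix e e with hMdef
    set N := (J * V * Jᵀ).submatrix e e with hNdef
    have hMN : M * N = 1 := by
      rw [hMdef, hNdef, Matrix.submatrix_mul_equiv, hVinv, Matrix.submatrix_one_equiv]
    -- block decomposition
    have hM : M = fromBlocks M.toBlocks₁₁ M.toBlocks₁₂ M.toBlocks₂₁ M.toBlocks₂₂ :=
      (fromBlocks_toBlocks M).symm
    have hN : N = fromBlocks N.toBlocks₁₁ N.toBlocks₁₂ N.toBlocks₂₁ N.toBlocks₂₂ :=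
      (fromBlocks_toBlocks N).symm
    have hblocks := hMN
    rw [hM, hN, fromBlocks_multiply, ← fromBlocks_one] at hblocks
    have h12 : M.toBlocks₁₁ * N.toBlocks₁₂ + M.toBlocks₁₂ * N.toBlocks₂₂ = 0 := by
      have := congrArg Matrix.toBlocks₁₂ hblocks
      simp only [Matrix.toBlocks_fromBlocks₁₂] at this
      exact this
    have h22 : M.toBlocks₂₁ * N.toBlocks₁₂ + M.toBlocks₂₂ * N.toBlocks₂₂ = 1 := by
      have := congrArg Matrix.toBlocks₂₂ hblocks
      simp only [Matrix.toBlocks_fromBlocks₂₂] at this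
      exact this
    have key : M * fromBlocks 1 N.toBlocks₁₂ 0 N.toBlocks₂₂
        = fromBlocks M.toBlocks₁₁ 0 M.toBlocks₂₁ 1 := by
      rw [hM, fromBlocks_multiply]
      simp [h12, h22]
    have hdetM : M.det = 1 := by
      rw [hMdef, Matrix.det_submatrix_equiv_self, hVdef, hdetV]
    have hdetkey := congrArg Matrix.det key
    rw [Matrix.det_mul, hdetM, one_mul, Matrix.det_fromBlocks_zero₂₁,
      Matrix.det_fromBlocks_zero₁₂] at hdetkey
    simp only [Matrix.det_one, one_mul, mul_one] at hdetkey
    -- identify the blocks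
    have hA : M.toBlocks₁₁ = V.submatrix
        (fun p : {x // x ∈ X} × Fin 2 => ((p.1 : Fin n), p.2))
        (fun p : {x // x ∈ X} × Fin 2 => ((p.1 : Fin n), p.2)) := by
      ext p q
      simp only [Matrix.toBlocks₁₁, Matrix.of_apply, hMdef, Matrix.submatrix_apply, he₁]
    have hD : N.toBlocks₂₂ = (J * V * Jᵀ).submatrix
        (fun p : {x // x ∈ Xᶜ} × Fin 2 => ((p.1 : Fin n), p.2))
        (fun p : {x // x ∈ Xᶜ} × Fin 2 => ((p.1 : Fin n), p.2)) := by
      ext p q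
      simp only [Matrix.toBlocks₂₂, Matrix.of_apply, hNdef, Matrix.submatrix_apply, he₂]
    rw [hA, hD] at hdetkey
    rw [hJdef, Jmat_conj_submatrix (fun x : {x // x ∈ Xᶜ} => (x : Fin n)) (S * Sᵀ)] at hdetkey
    rw [Matrix.det_mul, Matrix.det_mul, Matrix.det_transpose, det_Jmat, one_mul, mul_one]
      at hdetkey
    exact hdetkey.symm
  · exact hdetV

end
end

section
/- Monotonicity of f_n in m: For every positive integer n, the function m ↦ f_n(m) is strictly monotonically increasing on (0, ∞): for all real 0 < x < y, f_n(x) < f_n(y). -/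
/-- The function `f_n(m)` of Eq. (13): tight bound relating von Neumann entropy
and log-determinant of Gaussian states, with `coth t = cosh t / sinh t`. -/
noncomputable def f (n : ℕ) (m : ℝ) : ℝ :=
  ((n : ℝ) / 2) * (Real.log ((Real.exp (m / (n : ℝ)) - 1) / 4)
    + Real.exp (m / (2 * (n : ℝ))) *
        Real.log (Real.cosh (m / (4 * (n : ℝ))) / Real.sinh (m / (4 * (n : ℝ)))))

noncomputable def h (t : ℝ) : ℝ :=
  2 * t + Real.log (Real.sinh t) + Real.log (Real.cosh t)
    + Real.exp (2 * t) * (Real.log (Real.cosh t) - Real.log (Real.sinh t))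

lemma exp4_eq (t : ℝ) :
    Real.exp (4 * t) - 1 = 4 * (Real.exp (2 * t) * (Real.sinh t * Real.cosh t)) := by
  have h2 : Real.exp (2 * t) = Real.exp t * Real.exp t := by
    rw [← Real.exp_add]; ring_nf
  have h4 : Real.exp (4 * t) = Real.exp t * Real.exp t * Real.exp t * Real.exp t := by
    rw [← Real.exp_add, ← Real.exp_add, ← Real.exp_add]; ring_nf
  have hneg : Real.exp (-t) = (Real.exp t)⁻¹ := Real.exp_neg t
  rw [Real.sinh_eq, Real.cosh_eq, h2, h4, hneg]
  have := Real.exp_ne_zero t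
  field_simp
  ring

lemma h_hasDerivAt {t : ℝ} (ht : 0 < t) :
    HasDerivAt h (2 * Real.exp (2 * t) * (Real.log (Real.cosh t) - Real.log (Real.sinh t))) t := by
  have hs : 0 < Real.sinh t := Real.sinh_pos_iff.2 ht
  have hc : 0 < Real.cosh t := Real.cosh_pos t
  have d1 : HasDerivAt (fun u : ℝ => 2 * u) 2 t := by
    simpa using (hasDerivAt_id t).const_mul (2 : ℝ)
  have dls : HasDerivAt (fun u : ℝ => Real.log (Real.sinh u)) (Real.cosh t / Real.sinh t) t :=
    (Real.hasDerivAt_sinh t).log hs.ne'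
  have dlc : HasDerivAt (fun u : ℝ => Real.log (Real.cosh u)) (Real.sinh t / Real.cosh t) t :=
    (Real.hasDerivAt_cosh t).log hc.ne'
  have de : HasDerivAt (fun u : ℝ => Real.exp (2 * u)) (Real.exp (2 * t) * 2) t := by
    simpa using (((hasDerivAt_id t).const_mul (2 : ℝ)).exp)
  have dprod := de.mul (dlc.sub dls)
  have dsum := ((d1.add dls).add dlc).add dprod
  refine dsum.congr_deriv ?_
  set c := Real.cosh t
  set s := Real.sinh t
  set E := Real.exp (2 * t) with hEdef
  have hE : E = (c + s) ^ 2 := by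
    rw [hEdef, two_mul, Real.exp_add, ← Real.cosh_add_sinh t]; ring
  have hid : c ^ 2 - s ^ 2 = 1 := Real.cosh_sq_sub_sinh_sq t
  have key : c / s + s / c + E * (s / c - c / s) = -2 := by
    have step : c / s + s / c + E * (s / c - c / s)
        = (c ^ 2 + s ^ 2 + E * (s ^ 2 - c ^ 2)) / (s * c) := by
      field_simp
    have hnum : c ^ 2 + s ^ 2 + E * (s ^ 2 - c ^ 2) = -(2 * (s * c)) := by
      have h1 : s ^ 2 - c ^ 2 = -1 := by linarith
      rw [h1, hE]; ring
    rw [step, hnum]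
    field_simp
  simp only [Pi.sub_apply]
  linarith [key]

lemma h_strictMonoOn : StrictMonoOn h (Set.Ioi 0) := by
  apply strictMonoOn_of_deriv_pos (convex_Ioi 0)
  · intro t ht
    exact (h_hasDerivAt ht).continuousAt.continuousWithinAt
  · intro t ht
    rw [interior_Ioi] at ht
    rw [(h_hasDerivAt ht).deriv]
    have hs : 0 < Real.sinh t := Real.sinh_pos_iff.2 ht
    have hsc : Real.sinh t < Real.cosh t := by
      nlinarith [Real.cosh_sub_sinh t, Real.exp_pos (-t)]
    have : Real.log (Real.sinh t) < Real.log (Real.cosh t) := Real.log_lt_log hs hsc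
    have := Real.exp_pos (2 * t)
    nlinarith

lemma f_eq (n : ℕ) (hn : 0 < n) (m : ℝ) (hm : 0 < m) :
    f n m = ((n : ℝ) / 2) * h (m / (4 * n)) := by
  have hn' : (0 : ℝ) < n := Nat.cast_pos.2 hn
  have h4n : (0 : ℝ) < 4 * n := by linarith
  set t := m / (4 * n) with htdef
  have ht : 0 < t := div_pos hm h4n
  have h1 : m / (n : ℝ) = 4 * t := by rw [htdef]; field_simp
  have h2 : m / (2 * (n : ℝ)) = 2 * t := by rw [htdef]; field_simp; norm_num
  have hs : 0 < Real.sinh t := Real.sinh_pos_iff.2 ht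
  have hc : 0 < Real.cosh t := Real.cosh_pos t
  have hprod : (Real.exp (4 * t) - 1) / 4 = Real.exp (2 * t) * (Real.sinh t * Real.cosh t) := by
    rw [exp4_eq]; ring
  unfold f h
  rw [h1, h2, hprod, Real.log_mul (Real.exp_ne_zero _) (mul_pos hs hc).ne',
    Real.log_mul hs.ne' hc.ne', Real.log_exp, Real.log_div hc.ne' hs.ne']
  ring

/-- **Monotonicity of `f_n` in `m`**: for every positive integer `n`, the map
`m ↦ f n m` is strictly increasing on `(0, ∞)`. -/
theorem f_strictMonoOn (n : ℕ) (hn : 0 < n) (x y : ℝ) (hx : 0 < x) (hxy : x < y) :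
    f n x < f n y := by
  have hn' : (0 : ℝ) < n := Nat.cast_pos.2 hn
  rw [f_eq n hn x hx, f_eq n hn y (hx.trans hxy)]
  have h4n : (0 : ℝ) < 4 * n := by linarith
  have hx' : x / (4 * n) ∈ Set.Ioi (0:ℝ) := Set.mem_Ioi.2 (div_pos hx h4n)
  have hy' : y / (4 * n) ∈ Set.Ioi (0:ℝ) := Set.mem_Ioi.2 (div_pos (hx.trans hxy) h4n)
  have hlt : x / (4 * n) < y / (4 * n) := div_lt_div_of_pos_right hxy h4n
  exact mul_lt_mul_of_pos_left (h_strictMonoOn hx' hy' hlt) (half_pos hn')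
end

section
/- Concavity of f_n in m: For every positive integer n, the function m ↦ f_n(m) is concave on (0, ∞): for all real x, y > 0 and t ∈ [0,1], f_n(t·x + (1−t)·y) ≥ t·f_n(x) + (1−t)·f_n(y). -/
open Real Set

lemma key_ineq (u : ℝ) (hu : 0 < u) :
    Real.log (Real.cosh u / Real.sinh u) ≤ 1 / (2 * Real.sinh u * Real.cosh u) := by
  have hs : 0 < Real.sinh u := Real.sinh_pos_iff.2 hu
  have hc : 0 < Real.cosh u := Real.cosh_pos u
  have hlt : Real.sinh u < Real.cosh u := by
    nlinarith [Real.cosh_sub_sinh u, Real.exp_pos (-u)]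
  have h1 : 1 < Real.cosh u / Real.sinh u := (one_lt_div hs).2 hlt
  have hL : 0 < Real.log (Real.cosh u / Real.sinh u) := Real.log_pos h1
  have hexp : Real.exp (Real.log (Real.cosh u / Real.sinh u)) = Real.cosh u / Real.sinh u :=
    Real.exp_log (by positivity)
  have hsinh : Real.sinh (Real.log (Real.cosh u / Real.sinh u))
      = 1 / (2 * Real.sinh u * Real.cosh u) := by
    rw [Real.sinh_eq, Real.exp_neg, hexp]
    have h2 := Real.cosh_sq_sub_sinh_sq u
    field_simp
    linear_combination h2
  have := (Real.self_lt_sinh_iff.2 hL).le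
  linarith [hsinh ▸ this]

lemma hasDerivAt_f (n : ℕ) (hn : 0 < n) {m : ℝ} (hm : 0 < m) :
    HasDerivAt (f n) (Real.exp (m / (2 * (n : ℝ))) / 4 *
      Real.log (Real.cosh (m / (4 * (n : ℝ))) / Real.sinh (m / (4 * (n : ℝ))))) m := by
  set c : ℝ := (n : ℝ) with hcdef
  have hc : 0 < c := by simpa [hcdef] using (Nat.cast_pos.mpr hn : (0:ℝ) < n)
  have h1 : HasDerivAt (fun m : ℝ => m / c) (1 / c) m := by
    simpa using (hasDerivAt_id m).div_const c
  have h2 : HasDerivAt (fun m : ℝ => m / (2 * c)) (1 / (2 * c)) m := by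
    simpa using (hasDerivAt_id m).div_const (2 * c)
  have h4 : HasDerivAt (fun m : ℝ => m / (4 * c)) (1 / (4 * c)) m := by
    simpa using (hasDerivAt_id m).div_const (4 * c)
  have hE1 : 1 < Real.exp (m / c) := by
    rw [show (1:ℝ) = Real.exp 0 by simp]
    exact Real.exp_lt_exp.2 (by positivity)
  have hs : 0 < Real.sinh (m / (4 * c)) := Real.sinh_pos_iff.2 (by positivity)
  have hco : 0 < Real.cosh (m / (4 * c)) := Real.cosh_pos _
  have hA : HasDerivAt (fun m : ℝ => Real.log ((Real.exp (m / c) - 1) / 4))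
      ((Real.exp (m / c) * (1 / c) / 4) / ((Real.exp (m / c) - 1) / 4)) m :=
    HasDerivAt.log (((h1.exp).sub_const 1).div_const 4) (ne_of_gt (div_pos (by linarith) (by norm_num)))
  have hB : HasDerivAt (fun m : ℝ => Real.exp (m / (2 * c)))
      (Real.exp (m / (2 * c)) * (1 / (2 * c))) m := h2.exp
  have hq : HasDerivAt
      (fun m : ℝ => Real.cosh (m / (4 * c)) / Real.sinh (m / (4 * c)))
      ((Real.sinh (m / (4 * c)) * (1 / (4 * c)) * Real.sinh (m / (4 * c)) -
        Real.cosh (m / (4 * c)) * (Real.cosh (m / (4 * c)) * (1 / (4 * c)))) /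
        (Real.sinh (m / (4 * c)))^2) m :=
    (h4.cosh).div (h4.sinh) (ne_of_gt hs)
  have hC : HasDerivAt
      (fun m : ℝ => Real.log (Real.cosh (m / (4 * c)) / Real.sinh (m / (4 * c))))
      (((Real.sinh (m / (4 * c)) * (1 / (4 * c)) * Real.sinh (m / (4 * c)) -
        Real.cosh (m / (4 * c)) * (Real.cosh (m / (4 * c)) * (1 / (4 * c)))) /
        (Real.sinh (m / (4 * c)))^2) /
        (Real.cosh (m / (4 * c)) / Real.sinh (m / (4 * c)))) m :=
    hq.log (by positivity)
  have hf := ((hA.add (hB.mul hC)).const_mul (c / 2))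
  have hfe : f n = fun m : ℝ => (c / 2) * (Real.log ((Real.exp (m / c) - 1) / 4)
    + Real.exp (m / (2 * c)) *
        Real.log (Real.cosh (m / (4 * c)) / Real.sinh (m / (4 * c)))) := rfl
  rw [hfe]
  refine hf.congr_deriv ?_
  -- derivative values agree
  have hE : 0 < Real.exp (m / (4 * c)) := Real.exp_pos _
  have hE1' : 1 < Real.exp (m / (4 * c)) := by
    rw [show (1:ℝ) = Real.exp 0 by simp]
    exact Real.exp_lt_exp.2 (by positivity)
  have e2 : Real.exp (m / (2 * c)) = Real.exp (m / (4 * c)) ^ 2 := by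
    rw [← Real.exp_nat_mul]; norm_num; ring_nf
  have e4 : Real.exp (m / c) = Real.exp (m / (4 * c)) ^ 4 := by
    rw [← Real.exp_nat_mul]; norm_num; ring_nf
  have hcosh : Real.cosh (m / (4 * c)) =
      (Real.exp (m / (4 * c)) + (Real.exp (m / (4 * c)))⁻¹) / 2 := by
    rw [Real.cosh_eq, Real.exp_neg]
  have hsinh : Real.sinh (m / (4 * c)) =
      (Real.exp (m / (4 * c)) - (Real.exp (m / (4 * c)))⁻¹) / 2 := by
    rw [Real.sinh_eq, Real.exp_neg]
  set L := Real.log (Real.cosh (m / (4 * c)) / Real.sinh (m / (4 * c))) with hLdef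
  rw [e2, e4, hcosh, hsinh]
  set E := Real.exp (m / (4 * c)) with hEdef
  have hE4 : (1:ℝ) < E ^ 4 := one_lt_pow₀ hE1' (by norm_num)
  have hEne : E ≠ 0 := ne_of_gt hE
  have hinv : E⁻¹ < 1 := inv_lt_one_of_one_lt₀ hE1'
  have hsub : E - E⁻¹ ≠ 0 := by nlinarith
  have h41 : E ^ 4 - 1 ≠ 0 := by nlinarith
  have hE2 : (1:ℝ) < E ^ 2 := one_lt_pow₀ hE1' (by norm_num)
  have h21 : E ^ 2 - 1 ≠ 0 := by nlinarith
  have hden : E ^ 4 * c ^ 2 * 256 + (-(E ^ 6 * c ^ 2 * 256) - E ^ 8 * c ^ 2 * 256) +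
      E ^ 10 * c ^ 2 * 256 ≠ 0 := by
    have : E ^ 4 * c ^ 2 * 256 + (-(E ^ 6 * c ^ 2 * 256) - E ^ 8 * c ^ 2 * 256) +
        E ^ 10 * c ^ 2 * 256 = 256 * c ^ 2 * E ^ 4 * (E ^ 2 - 1) * (E ^ 4 - 1) := by ring
    rw [this]
    positivity
  have hEE : E * E - 1 ≠ 0 := by nlinarith
  have hEE1 : E * E + 1 ≠ 0 := by nlinarith
  field_simp
  ring

lemma hasDerivAt_f' (n : ℕ) (hn : 0 < n) {m : ℝ} (hm : 0 < m) :
    HasDerivAt (fun m : ℝ => Real.exp (m / (2 * (n : ℝ))) / 4 *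
      Real.log (Real.cosh (m / (4 * (n : ℝ))) / Real.sinh (m / (4 * (n : ℝ)))))
      (Real.exp (m / (2 * (n : ℝ))) / (8 * (n : ℝ)) *
        (Real.log (Real.cosh (m / (4 * (n : ℝ))) / Real.sinh (m / (4 * (n : ℝ))))
          - 1 / (2 * Real.sinh (m / (4 * (n : ℝ))) * Real.cosh (m / (4 * (n : ℝ)))))) m := by
  set c : ℝ := (n : ℝ) with hcdef
  have hc : 0 < c := by simpa [hcdef] using (Nat.cast_pos.mpr hn : (0:ℝ) < n)
  have h2 : HasDerivAt (fun m : ℝ => m / (2 * c)) (1 / (2 * c)) m := by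
    simpa using (hasDerivAt_id m).div_const (2 * c)
  have h4 : HasDerivAt (fun m : ℝ => m / (4 * c)) (1 / (4 * c)) m := by
    simpa using (hasDerivAt_id m).div_const (4 * c)
  have hs : 0 < Real.sinh (m / (4 * c)) := Real.sinh_pos_iff.2 (by positivity)
  have hco : 0 < Real.cosh (m / (4 * c)) := Real.cosh_pos _
  have hB : HasDerivAt (fun m : ℝ => Real.exp (m / (2 * c)))
      (Real.exp (m / (2 * c)) * (1 / (2 * c))) m := h2.exp
  have hq : HasDerivAt
      (fun m : ℝ => Real.cosh (m / (4 * c)) / Real.sinh (m / (4 * c)))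
      ((Real.sinh (m / (4 * c)) * (1 / (4 * c)) * Real.sinh (m / (4 * c)) -
        Real.cosh (m / (4 * c)) * (Real.cosh (m / (4 * c)) * (1 / (4 * c)))) /
        (Real.sinh (m / (4 * c)))^2) m :=
    (h4.cosh).div (h4.sinh) (ne_of_gt hs)
  have hC : HasDerivAt
      (fun m : ℝ => Real.log (Real.cosh (m / (4 * c)) / Real.sinh (m / (4 * c))))
      (((Real.sinh (m / (4 * c)) * (1 / (4 * c)) * Real.sinh (m / (4 * c)) -
        Real.cosh (m / (4 * c)) * (Real.cosh (m / (4 * c)) * (1 / (4 * c)))) /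
        (Real.sinh (m / (4 * c)))^2) /
        (Real.cosh (m / (4 * c)) / Real.sinh (m / (4 * c)))) m :=
    hq.log (by positivity)
  have hD := (hB.div_const 4).mul hC
  refine hD.congr_deriv ?_
  have hE : 0 < Real.exp (m / (4 * c)) := Real.exp_pos _
  have hE1' : 1 < Real.exp (m / (4 * c)) := by
    rw [show (1:ℝ) = Real.exp 0 by simp]
    exact Real.exp_lt_exp.2 (by positivity)
  have e2 : Real.exp (m / (2 * c)) = Real.exp (m / (4 * c)) ^ 2 := by
    rw [← Real.exp_nat_mul]; norm_num; ring_nf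
  have hcosh : Real.cosh (m / (4 * c)) =
      (Real.exp (m / (4 * c)) + (Real.exp (m / (4 * c)))⁻¹) / 2 := by
    rw [Real.cosh_eq, Real.exp_neg]
  have hsinh : Real.sinh (m / (4 * c)) =
      (Real.exp (m / (4 * c)) - (Real.exp (m / (4 * c)))⁻¹) / 2 := by
    rw [Real.sinh_eq, Real.exp_neg]
  set L := Real.log (Real.cosh (m / (4 * c)) / Real.sinh (m / (4 * c))) with hLdef
  rw [e2, hcosh, hsinh]
  set E := Real.exp (m / (4 * c)) with hEdef
  have hEne : E ≠ 0 := ne_of_gt hE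
  have hinv : E⁻¹ < 1 := inv_lt_one_of_one_lt₀ hE1'
  have hsub : E - E⁻¹ ≠ 0 := by nlinarith
  have hEE : E * E - 1 ≠ 0 := by nlinarith
  have hEE1 : E * E + 1 ≠ 0 := by nlinarith
  field_simp
  ring

/-- **Concavity of `f_n` in `m`**: for every positive integer `n`, the map
`m ↦ f n m` is concave on `(0, ∞)`. -/
theorem f_concaveOn (n : ℕ) (hn : 0 < n) (x y : ℝ) (hx : 0 < x) (hy : 0 < y)
    (t : ℝ) (ht0 : 0 ≤ t) (ht1 : t ≤ 1) :
    f n (t * x + (1 - t) * y) ≥ t * f n x + (1 - t) * f n y := by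
  set c : ℝ := (n : ℝ) with hcdef
  have hc : 0 < c := by simpa [hcdef] using (Nat.cast_pos.mpr hn : (0:ℝ) < n)
  set D : ℝ → ℝ := fun m : ℝ => Real.exp (m / (2 * c)) / 4 *
      Real.log (Real.cosh (m / (4 * c)) / Real.sinh (m / (4 * c))) with hDdef
  have hconc : ConcaveOn ℝ (Set.Ioi (0:ℝ)) (f n) := by
    have hderiv_eq : ∀ m ∈ Set.Ioi (0:ℝ), deriv (f n) m = D m := fun m hm =>
      (hasDerivAt_f n hn hm).deriv
    apply AntitoneOn.concaveOn_of_deriv (convex_Ioi 0)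
    · exact fun m hm => (hasDerivAt_f n hn hm).continuousAt.continuousWithinAt
    · rw [interior_Ioi]
      exact fun m hm => (hasDerivAt_f n hn hm).differentiableAt.differentiableWithinAt
    · rw [interior_Ioi]
      have hA : AntitoneOn D (Set.Ioi (0:ℝ)) := by
        apply antitoneOn_of_deriv_nonpos (convex_Ioi 0)
        · exact fun m hm => (hasDerivAt_f' n hn hm).continuousAt.continuousWithinAt
        · rw [interior_Ioi]
          exact fun m hm => (hasDerivAt_f' n hn hm).differentiableAt.differentiableWithinAt
        · rw [interior_Ioi]
          intro m hm
          rw [(hasDerivAt_f' n hn hm).deriv]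
          have hu : (0:ℝ) < m / (4 * c) := by
            have : (0:ℝ) < m := hm
            positivity
          have hkey := key_ineq (m / (4 * c)) hu
          have hpos : 0 < Real.exp (m / (2 * c)) / (8 * c) := by positivity
          exact mul_nonpos_iff.2 (Or.inl ⟨hpos.le, by linarith⟩)
      intro a ha b hb hab
      rw [hderiv_eq a ha, hderiv_eq b hb]
      exact hA ha hb hab
  have h : t • f n x + (1 - t) • f n y ≤ f n (t • x + (1 - t) • y) :=
    hconc.2 (Set.mem_Ioi.2 hx) (Set.mem_Ioi.2 hy) ht0 (by linarith) (by ring)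
  simpa [smul_eq_mul] using h
end

section
/- Vanishing of f_n at the origin: For every positive integer n, f_n(m) tends to 0 as m tends to 0 from the right: lim_{m→0⁺} f_n(m) = 0. -/
open Real Filter

/-- **Vanishing of `f_n` at the origin**: `f n m → 0` as `m → 0⁺`. -/
theorem f_tendsto_zero (n : ℕ) (hn : 0 < n) :
    Filter.Tendsto (f n) (nhdsWithin 0 (Set.Ioi 0)) (nhds 0) := by
  have hn' : (0:ℝ) < (n : ℝ) := by exact_mod_cast hn
  set g : ℝ → ℝ := fun m => ((n:ℝ)/2) * (m/(2*(n:ℝ))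
      + (-2 * Real.exp (m/(4*(n:ℝ))) * Real.sinh (m/(4*(n:ℝ)))) * Real.log (Real.sinh (m/(4*(n:ℝ))))
      + (1 + Real.exp (m/(2*(n:ℝ)))) * Real.log (Real.cosh (m/(4*(n:ℝ))))) with hg
  -- the two functions agree on Ioi 0
  have heq : ∀ m ∈ Set.Ioi (0:ℝ), f n m = g m := by
    intro m hm
    have hm : (0:ℝ) < m := hm
    have ht : (0:ℝ) < m/(4*(n:ℝ)) := by positivity
    have hs : 0 < Real.sinh (m/(4*(n:ℝ))) := Real.sinh_pos_iff.mpr ht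
    have hc : 0 < Real.cosh (m/(4*(n:ℝ))) := Real.cosh_pos _
    have hexp2 : Real.exp (m/(2*(n:ℝ))) = Real.exp (m/(4*(n:ℝ))) * Real.exp (m/(4*(n:ℝ))) := by
      rw [← Real.exp_add]; congr 1; field_simp; ring
    have hexpN : Real.exp (m/(n:ℝ)) = Real.exp (m/(2*(n:ℝ))) * Real.exp (m/(2*(n:ℝ))) := by
      rw [← Real.exp_add]; congr 1; field_simp; ring
    have hneg : Real.exp (m/(4*(n:ℝ))) * Real.exp (-(m/(4*(n:ℝ)))) = 1 := by
      rw [← Real.exp_add]; simp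
    have hprod : (Real.exp (m/(n:ℝ)) - 1)/4
        = Real.exp (m/(2*(n:ℝ))) * (Real.sinh (m/(4*(n:ℝ))) * Real.cosh (m/(4*(n:ℝ)))) := by
      rw [Real.sinh_eq, Real.cosh_eq, hexpN, hexp2]
      linear_combination ((Real.exp (m/(4*(n:ℝ))) * Real.exp (-(m/(4*(n:ℝ)))) + 1)/4) * hneg
    have hlog1 : Real.log ((Real.exp (m/(n:ℝ)) - 1)/4)
        = m/(2*(n:ℝ)) + (Real.log (Real.sinh (m/(4*(n:ℝ)))) + Real.log (Real.cosh (m/(4*(n:ℝ))))) := by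
      rw [hprod, Real.log_mul (Real.exp_ne_zero _) (by positivity), Real.log_exp,
        Real.log_mul hs.ne' hc.ne']
    have hlog2 : Real.log (Real.cosh (m/(4*(n:ℝ))) / Real.sinh (m/(4*(n:ℝ))))
        = Real.log (Real.cosh (m/(4*(n:ℝ)))) - Real.log (Real.sinh (m/(4*(n:ℝ)))) :=
      Real.log_div hc.ne' hs.ne'
    have hfac : (1 : ℝ) - Real.exp (m/(2*(n:ℝ)))
        = -2 * Real.exp (m/(4*(n:ℝ))) * Real.sinh (m/(4*(n:ℝ))) := by
      rw [Real.sinh_eq, hexp2]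
      linear_combination -hneg
    simp only [f, hg]
    rw [hlog1, hlog2, ← hfac]
    ring
  -- limits
  have ht4 : Tendsto (fun m : ℝ => m/(4*(n:ℝ))) (nhdsWithin 0 (Set.Ioi 0)) (nhds 0) := by
    have : Tendsto (fun m : ℝ => m/(4*(n:ℝ))) (nhds 0) (nhds 0) := by
      simpa using (continuous_id.div_const (4*(n:ℝ))).tendsto 0
    exact this.mono_left nhdsWithin_le_nhds
  have ht2 : Tendsto (fun m : ℝ => m/(2*(n:ℝ))) (nhdsWithin 0 (Set.Ioi 0)) (nhds 0) := by
    have : Tendsto (fun m : ℝ => m/(2*(n:ℝ))) (nhds 0) (nhds 0) := by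
      simpa using (continuous_id.div_const (2*(n:ℝ))).tendsto 0
    exact this.mono_left nhdsWithin_le_nhds
  have hsinh : Tendsto (fun m : ℝ => Real.sinh (m/(4*(n:ℝ)))) (nhdsWithin 0 (Set.Ioi 0))
      (nhdsWithin 0 (Set.Ioi 0)) := by
    rw [tendsto_nhdsWithin_iff]
    constructor
    · have := (Real.continuous_sinh.tendsto 0).comp ht4
      simpa [Function.comp_def] using this
    · filter_upwards [self_mem_nhdsWithin] with m hm
      have hm' : (0:ℝ) < m := hm
      exact Real.sinh_pos_iff.mpr (by positivity : (0:ℝ) < m/(4*(n:ℝ)))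
  have hslogs : Tendsto (fun s : ℝ => s * Real.log s) (nhdsWithin 0 (Set.Ioi 0)) (nhds 0) := by
    have := tendsto_log_mul_rpow_nhdsGT_zero (r := 1) one_pos
    simp only [Real.rpow_one] at this
    exact this.congr fun s => mul_comm _ _
  have hterm2 : Tendsto (fun m : ℝ =>
      (-2 * Real.exp (m/(4*(n:ℝ))) * Real.sinh (m/(4*(n:ℝ)))) * Real.log (Real.sinh (m/(4*(n:ℝ)))))
      (nhdsWithin 0 (Set.Ioi 0)) (nhds 0) := by
    have hA : Tendsto (fun m : ℝ => -2 * Real.exp (m/(4*(n:ℝ)))) (nhdsWithin 0 (Set.Ioi 0))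
        (nhds (-2)) := by
      have := ((Real.continuous_exp.tendsto 0).comp ht4).const_mul (-2)
      simpa using this
    have hB : Tendsto (fun m : ℝ => Real.sinh (m/(4*(n:ℝ))) * Real.log (Real.sinh (m/(4*(n:ℝ)))))
        (nhdsWithin 0 (Set.Ioi 0)) (nhds 0) := hslogs.comp hsinh
    have := hA.mul hB
    simpa [mul_assoc] using this
  have hterm3 : Tendsto (fun m : ℝ =>
      (1 + Real.exp (m/(2*(n:ℝ)))) * Real.log (Real.cosh (m/(4*(n:ℝ))))) (nhdsWithin 0 (Set.Ioi 0))
      (nhds 0) := by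
    have h1 : Tendsto (fun m : ℝ => 1 + Real.exp (m/(2*(n:ℝ)))) (nhdsWithin 0 (Set.Ioi 0))
        (nhds 2) := by
      have := ((Real.continuous_exp.tendsto 0).comp ht2).const_add 1
      norm_num at this
      exact this
    have hcosh : Tendsto (fun m : ℝ => Real.cosh (m/(4*(n:ℝ)))) (nhdsWithin 0 (Set.Ioi 0))
        (nhds 1) := by
      have := (Real.continuous_cosh.tendsto 0).comp ht4
      simpa [Function.comp_def] using this
    have h2 : Tendsto (fun m : ℝ => Real.log (Real.cosh (m/(4*(n:ℝ))))) (nhdsWithin 0 (Set.Ioi 0))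
        (nhds 0) := by
      have := (Real.continuousAt_log one_ne_zero).tendsto.comp hcosh
      simpa [Function.comp_def] using this
    simpa using h1.mul h2
  have hgten : Tendsto g (nhdsWithin 0 (Set.Ioi 0)) (nhds 0) := by
    have hsum := (ht2.add hterm2).add hterm3
    have := hsum.const_mul ((n:ℝ)/2)
    simpa [hg] using this
  refine hgten.congr' ?_
  filter_upwards [self_mem_nhdsWithin] with m hm
  exact (heq m hm).symm
end
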